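/- arXiv:2004.03171 — 6 statements merged into one kernel-verified Lean document; each statement's English description precedes it below -/
import Mathlib

section
/- There exist functions f, g ∈ T_2 with ‖f‖_2 = ‖g‖_2 = ‖f+g‖_2 = ‖f−g‖_2 = 1; in particular the parallelogram law ‖f+g‖_2² + ‖f−g‖_2² = 2(‖f‖_2² + ‖g‖_2²) fails, so the norm ‖·‖_2 on T_2 is not induced by an inner product (T_2 is not a Hilbert space under ‖·‖_2). Explicitly, one may take f = √(q+1)·χ_{v₁} and g = √(q(q+1))·χ_{v₂} for any vertices v₁, v₂ with |v₁| = 1 and |v₂| = 2, where χ_v denotes the characteristic function of {v}. -/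
open scoped BigOperators Classical

noncomputable section

/-- `treeC q n` is the number `c_n` of vertices at level `n` of the
`(q+1)`-homogeneous rooted tree: `c_0 = 1` and `c_n = (q+1) q^(n-1)` for `n ≥ 1`. -/
def treeC (q n : ℕ) : ℕ := if n = 0 then 1 else (q + 1) * q ^ (n - 1)

/-- An abstract `(q+1)`-homogeneous rooted tree, described by its vertex set, root,
level function `|·|` (graph distance to the root), and the level counts:
level `n` contains exactly `c_n = treeC q n` vertices. -/
structure HomTree (q : ℕ) where
  V : Type
  root : V
  level : V → ℕ
  level_eq_zero_iff : ∀ v : V, level v = 0 ↔ v = root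
  finiteLevel : ∀ n : ℕ, {v : V | level v = n}.Finite
  card_level : ∀ n : ℕ, (finiteLevel n).toFinset.card = treeC q n

namespace HomTree

variable {q : ℕ} (T : HomTree q)

/-- The set `D_n` of vertices of level `n`, as a finset. -/
def levelFinset (n : ℕ) : Finset T.V := (T.finiteLevel n).toFinset

/-- `M_p(n, f)` for `0 < p < ∞`:
`M_p(n,f) = ((1/c_n) ∑_{|v|=n} |f v|^p)^(1/p)` (which equals `|f o|` for `n = 0`). -/
def Mp (p : ℝ) (n : ℕ) (f : T.V → ℂ) : ℝ :=
  ((1 / (treeC q n : ℝ)) * ∑ v ∈ T.levelFinset n, ‖f v‖ ^ p) ^ (1 / p)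

/-- `M_∞(n, f) = max_{|v| = n} |f v|`. -/
def Minf (n : ℕ) (f : T.V → ℂ) : ℝ :=
  sSup ((fun v => ‖f v‖) '' {v : T.V | T.level v = n})

/-- `f ∈ T_p`, i.e. `‖f‖_p = sup_n M_p(n,f) < ∞`. -/
def memTp (p : ℝ) (f : T.V → ℂ) : Prop := BddAbove (Set.range fun n => T.Mp p n f)

/-- `‖f‖_p = sup_n M_p(n, f)`. -/
def normTp (p : ℝ) (f : T.V → ℂ) : ℝ := ⨆ n, T.Mp p n f

/-- `f ∈ T_∞`. -/
def memTinf (f : T.V → ℂ) : Prop := BddAbove (Set.range fun n => T.Minf n f)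

/-- `‖f‖_∞ = sup_n M_∞(n, f)`. -/
def normTinf (f : T.V → ℂ) : ℝ := ⨆ n, T.Minf n f

/-- `f ∈ T_{p,0}`: `f ∈ T_p` and `M_p(n,f) → 0` as `n → ∞`. -/
def memTp0 (p : ℝ) (f : T.V → ℂ) : Prop :=
  T.memTp p f ∧ Filter.Tendsto (fun n => T.Mp p n f) Filter.atTop (nhds 0)

/-- `f ∈ T_{∞,0}`. -/
def memTinf0 (f : T.V → ℂ) : Prop :=
  T.memTinf f ∧ Filter.Tendsto (fun n => T.Minf n f) Filter.atTop (nhds 0)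

/-- `N_φ(n, w)`: the number of preimages of `w` under `φ` at level `n`. -/
def Nphi (phi : T.V → T.V) (n : ℕ) (w : T.V) : ℕ :=
  ((T.levelFinset n).filter fun v => phi v = w).card

/-- `N_{m,n} = max_{|w| = m} N_φ(n, w)`. -/
def Nmax (phi : T.V → T.V) (m n : ℕ) : ℕ :=
  (T.levelFinset m).sup fun w => T.Nphi phi n w

/-- `C_φ` is a bounded operator on `T_p`: it maps `T_p` into `T_p` and
`‖f ∘ φ‖_p ≤ C ‖f‖_p` for some constant `C`. -/
def BoundedCompTp (p : ℝ) (phi : T.V → T.V) : Prop :=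
  (∀ f : T.V → ℂ, T.memTp p f → T.memTp p (f ∘ phi)) ∧
  ∃ C : ℝ, ∀ f : T.V → ℂ, T.memTp p f → T.normTp p (f ∘ phi) ≤ C * T.normTp p f

/-- The operator norm of `C_φ` on `T_p`: `sup {‖f ∘ φ‖_p : f ∈ T_p, ‖f‖_p = 1}`. -/
def opNormTp (p : ℝ) (phi : T.V → T.V) : ℝ :=
  sSup {x : ℝ | ∃ f : T.V → ℂ, T.memTp p f ∧ T.normTp p f = 1 ∧ x = T.normTp p (f ∘ phi)}

/-- `C_φ` is a bounded operator on `T_{p,0}`. -/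
def BoundedCompTp0 (p : ℝ) (phi : T.V → T.V) : Prop :=
  (∀ f : T.V → ℂ, T.memTp0 p f → T.memTp0 p (f ∘ phi)) ∧
  ∃ C : ℝ, ∀ f : T.V → ℂ, T.memTp0 p f → T.normTp p (f ∘ phi) ≤ C * T.normTp p f

/-- The operator norm of `C_φ` on `T_{p,0}`. -/
def opNormTp0 (p : ℝ) (phi : T.V → T.V) : ℝ :=
  sSup {x : ℝ | ∃ f : T.V → ℂ, T.memTp0 p f ∧ T.normTp p f = 1 ∧ x = T.normTp p (f ∘ phi)}

/-- `C_φ` is a bounded operator on `T_{∞,0}`. -/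
def BoundedCompTinf0 (phi : T.V → T.V) : Prop :=
  (∀ f : T.V → ℂ, T.memTinf0 f → T.memTinf0 (f ∘ phi)) ∧
  ∃ C : ℝ, ∀ f : T.V → ℂ, T.memTinf0 f → T.normTinf (f ∘ phi) ≤ C * T.normTinf f

end HomTree

section Aux

variable {q : ℕ} (T : HomTree q)

lemma aux_mem_levelFinset {v : T.V} {n : ℕ} :
    v ∈ T.levelFinset n ↔ T.level v = n := by
  simp [HomTree.levelFinset]

lemma aux_treeC_ne_zero (hq : 1 ≤ q) (n : ℕ) : (treeC q n : ℝ) ≠ 0 := by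
  have : 0 < treeC q n := by
    unfold treeC; split
    · norm_num
    · positivity
  exact_mod_cast this.ne'

lemma aux_Mp_zero_level (n : ℕ) (h : T.V → ℂ)
    (hz : ∀ v ∈ T.levelFinset n, h v = 0) : T.Mp 2 n h = 0 := by
  unfold HomTree.Mp
  rw [Finset.sum_eq_zero fun v hv => by
    rw [hz v hv]; simp [Real.zero_rpow (by norm_num : (2:ℝ) ≠ 0)]]
  rw [mul_zero, Real.zero_rpow (by norm_num : (1/(2:ℝ)) ≠ 0)]

lemma aux_Mp_single_level (hq : 1 ≤ q) (n : ℕ) (v₀ : T.V) (hv₀ : v₀ ∈ T.levelFinset n)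
    (h : T.V → ℂ) (hz : ∀ v ∈ T.levelFinset n, v ≠ v₀ → h v = 0)
    (hsq : ‖h v₀‖ ^ (2:ℝ) = (treeC q n : ℝ)) :
    T.Mp 2 n h = 1 := by
  unfold HomTree.Mp
  rw [Finset.sum_eq_single_of_mem v₀ hv₀ (fun v hv hne => by
    rw [hz v hv hne]; simp [Real.zero_rpow (by norm_num : (2:ℝ) ≠ 0)])]
  rw [hsq, one_div, inv_mul_cancel₀ (aux_treeC_ne_zero hq n), Real.one_rpow]

lemma aux_norm_one_of (h : T.V → ℂ) (hb : ∀ n, T.Mp 2 n h ≤ 1)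
    (m : ℕ) (hm : T.Mp 2 m h = 1) :
    T.memTp 2 h ∧ T.normTp 2 h = 1 := by
  have bdd : BddAbove (Set.range fun n => T.Mp 2 n h) := by
    refine ⟨1, ?_⟩; rintro x ⟨n, rfl⟩; exact hb n
  refine ⟨bdd, le_antisymm (ciSup_le hb) ?_⟩
  calc (1:ℝ) = T.Mp 2 m h := hm.symm
    _ ≤ _ := le_ciSup bdd m

end Aux

/-- There are `f, g ∈ T_2` with `‖f‖₂ = ‖g‖₂ = ‖f+g‖₂ = ‖f-g‖₂ = 1`, violating the
parallelogram law; explicitly one may take `f = √(q+1)·χ_{v₁}` and `g = √(q(q+1))·χ_{v₂}`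
for any vertices with `|v₁| = 1`, `|v₂| = 2`.  Hence `T_2` is not a Hilbert space. -/
theorem T2_not_hilbert (q : ℕ) (hq : 1 ≤ q) (T : HomTree q) :
    (∃ f g : T.V → ℂ, T.memTp 2 f ∧ T.memTp 2 g ∧
      T.normTp 2 f = 1 ∧ T.normTp 2 g = 1 ∧
      T.normTp 2 (f + g) = 1 ∧ T.normTp 2 (f - g) = 1 ∧
      T.normTp 2 (f + g) ^ 2 + T.normTp 2 (f - g) ^ 2 ≠
        2 * (T.normTp 2 f ^ 2 + T.normTp 2 g ^ 2)) ∧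
    (∀ v₁ v₂ : T.V, T.level v₁ = 1 → T.level v₂ = 2 →
      ∀ f g : T.V → ℂ,
        f = (fun v => if v = v₁ then ((Real.sqrt ((q : ℝ) + 1) : ℝ) : ℂ) else 0) →
        g = (fun v => if v = v₂ then ((Real.sqrt ((q : ℝ) * ((q : ℝ) + 1)) : ℝ) : ℂ) else 0) →
        T.memTp 2 f ∧ T.memTp 2 g ∧
        T.normTp 2 f = 1 ∧ T.normTp 2 g = 1 ∧
        T.normTp 2 (f + g) = 1 ∧ T.normTp 2 (f - g) = 1 ∧
        T.normTp 2 (f + g) ^ 2 + T.normTp 2 (f - g) ^ 2 ≠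
          2 * (T.normTp 2 f ^ 2 + T.normTp 2 g ^ 2)) := by
  have hmem : ∀ v : T.V, ∀ n : ℕ, v ∈ T.levelFinset n ↔ T.level v = n :=
    fun v n => aux_mem_levelFinset T
  suffices H : (∀ v₁ v₂ : T.V, T.level v₁ = 1 → T.level v₂ = 2 →
      ∀ f g : T.V → ℂ,
        f = (fun v => if v = v₁ then ((Real.sqrt ((q : ℝ) + 1) : ℝ) : ℂ) else 0) →
        g = (fun v => if v = v₂ then ((Real.sqrt ((q : ℝ) * ((q : ℝ) + 1)) : ℝ) : ℂ) else 0) →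
        T.memTp 2 f ∧ T.memTp 2 g ∧
        T.normTp 2 f = 1 ∧ T.normTp 2 g = 1 ∧
        T.normTp 2 (f + g) = 1 ∧ T.normTp 2 (f - g) = 1 ∧
        T.normTp 2 (f + g) ^ 2 + T.normTp 2 (f - g) ^ 2 ≠
          2 * (T.normTp 2 f ^ 2 + T.normTp 2 g ^ 2)) by
    refine ⟨?_, H⟩
    have h1 : ∃ v : T.V, T.level v = 1 := by
      have hc := T.card_level 1
      have : 0 < (T.finiteLevel 1).toFinset.card := by
        rw [hc]; unfold treeC; norm_num
      obtain ⟨v, hv⟩ := Finset.card_pos.mp this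
      exact ⟨v, by simpa using hv⟩
    have h2 : ∃ v : T.V, T.level v = 2 := by
      have hc := T.card_level 2
      have : 0 < (T.finiteLevel 2).toFinset.card := by
        rw [hc]; unfold treeC; positivity
      obtain ⟨v, hv⟩ := Finset.card_pos.mp this
      exact ⟨v, by simpa using hv⟩
    obtain ⟨v₁, hv₁⟩ := h1
    obtain ⟨v₂, hv₂⟩ := h2
    exact ⟨_, _, H v₁ v₂ hv₁ hv₂ _ _ rfl rfl⟩
  intro v₁ v₂ h1 h2 f g hf hg
  have hfv : ∀ v, f v = if v = v₁ then ((Real.sqrt ((q : ℝ) + 1) : ℝ) : ℂ) else 0 :=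
    fun v => by rw [hf]
  have hgv : ∀ v, g v = if v = v₂ then ((Real.sqrt ((q : ℝ) * ((q : ℝ) + 1)) : ℝ) : ℂ) else 0 :=
    fun v => by rw [hg]
  have hne : v₁ ≠ v₂ := by
    intro e; rw [e, h2] at h1; norm_num at h1
  -- g vanishes at level 1, f vanishes at level 2
  have hg1 : ∀ v, T.level v = 1 → g v = 0 := by
    intro v hv; rw [hgv v, if_neg]; intro e; rw [e, h2] at hv; norm_num at hv
  have hf2 : ∀ v, T.level v = 2 → f v = 0 := by
    intro v hv; rw [hfv v, if_neg]; intro e; rw [e, h1] at hv; norm_num at hv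
  have hf0 : ∀ v, v ≠ v₁ → f v = 0 := fun v hv => by rw [hfv v, if_neg hv]
  have hg0 : ∀ v, v ≠ v₂ → g v = 0 := fun v hv => by rw [hgv v, if_neg hv]
  have hv₁m : v₁ ∈ T.levelFinset 1 := (hmem v₁ 1).2 h1
  have hv₂m : v₂ ∈ T.levelFinset 2 := (hmem v₂ 2).2 h2
  have hsq1 : ‖(((Real.sqrt ((q : ℝ) + 1) : ℝ) : ℂ))‖ ^ (2:ℝ) = (treeC q 1 : ℝ) := by
    rw [Complex.norm_real, Real.norm_eq_abs, abs_of_nonneg (Real.sqrt_nonneg _),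
      show (2:ℝ) = ((2:ℕ):ℝ) by norm_num, Real.rpow_natCast,
      Real.sq_sqrt (by positivity)]
    unfold treeC; push_cast; ring
  have hsq2 : ‖(((Real.sqrt ((q : ℝ) * ((q : ℝ) + 1)) : ℝ) : ℂ))‖ ^ (2:ℝ)
      = (treeC q 2 : ℝ) := by
    rw [Complex.norm_real, Real.norm_eq_abs, abs_of_nonneg (Real.sqrt_nonneg _),
      show (2:ℝ) = ((2:ℕ):ℝ) by norm_num, Real.rpow_natCast,
      Real.sq_sqrt (by positivity)]
    unfold treeC; push_cast; ring
  -- Mp of f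
  have Mf0 : ∀ n, n ≠ 1 → T.Mp 2 n f = 0 := by
    intro n hn
    refine aux_Mp_zero_level T n f fun v hv => hf0 v fun e => ?_
    have hlv := (hmem v n).1 hv; rw [e, h1] at hlv; exact hn hlv.symm
  have Mf1 : T.Mp 2 1 f = 1 := by
    refine aux_Mp_single_level T hq 1 v₁ hv₁m f (fun v _ hv' => hf0 v hv') ?_
    rw [hfv v₁, if_pos rfl]; exact hsq1
  -- Mp of g
  have Mg0 : ∀ n, n ≠ 2 → T.Mp 2 n g = 0 := by
    intro n hn
    refine aux_Mp_zero_level T n g fun v hv => hg0 v fun e => ?_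
    have hlv := (hmem v n).1 hv; rw [e, h2] at hlv; exact hn hlv.symm
  have Mg2 : T.Mp 2 2 g = 1 := by
    refine aux_Mp_single_level T hq 2 v₂ hv₂m g (fun v _ hv' => hg0 v hv') ?_
    rw [hgv v₂, if_pos rfl]; exact hsq2
  -- Mp of f + g and f - g
  have key : ∀ s : T.V → ℂ, (∀ v, T.level v = 1 → s v = f v) →
      (∀ v, T.level v = 2 → ‖s v‖ = ‖g v‖) →
      (∀ v, v ≠ v₁ → v ≠ v₂ → s v = 0) →
      (∀ n, n ≠ 1 → n ≠ 2 → T.Mp 2 n s = 0) ∧ T.Mp 2 1 s = 1 ∧ T.Mp 2 2 s = 1 := by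
    intro s hs1 hs2 hs0
    refine ⟨?_, ?_, ?_⟩
    · intro n hn1 hn2
      refine aux_Mp_zero_level T n s fun v hv => ?_
      have hlv := (hmem v n).1 hv
      refine hs0 v (fun e => ?_) (fun e => ?_)
      · rw [e, h1] at hlv; exact hn1 hlv.symm
      · rw [e, h2] at hlv; exact hn2 hlv.symm
    · refine aux_Mp_single_level T hq 1 v₁ hv₁m s (fun v hv hv' => ?_) ?_
      · rw [hs1 v ((hmem v 1).1 hv), hf0 v hv']
      · rw [hs1 v₁ h1, hfv v₁, if_pos rfl]; exact hsq1
    · refine aux_Mp_single_level T hq 2 v₂ hv₂m s (fun v hv hv' => ?_) ?_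
      · refine hs0 v (fun e => ?_) hv'
        have hlv := (hmem v 2).1 hv
        rw [e, h1] at hlv; norm_num at hlv
      · rw [hs2 v₂ h2, hgv v₂, if_pos rfl]; exact hsq2
  have kadd := key (f + g) (fun v hv => by simp [Pi.add_apply, hg1 v hv])
    (fun v hv => by simp [Pi.add_apply, hf2 v hv])
    (fun v h₁ h₂ => by simp [Pi.add_apply, hf0 v h₁, hg0 v h₂])
  have ksub := key (f - g) (fun v hv => by simp [Pi.sub_apply, hg1 v hv])
    (fun v hv => by simp [Pi.sub_apply, hf2 v hv])
    (fun v h₁ h₂ => by simp [Pi.sub_apply, hf0 v h₁, hg0 v h₂])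
  -- assemble the norms
  have Nf : T.memTp 2 f ∧ T.normTp 2 f = 1 := by
    refine aux_norm_one_of T f (fun n => ?_) 1 Mf1
    by_cases h : n = 1
    · rw [h, Mf1]
    · rw [Mf0 n h]; norm_num
  have Ng : T.memTp 2 g ∧ T.normTp 2 g = 1 := by
    refine aux_norm_one_of T g (fun n => ?_) 2 Mg2
    by_cases h : n = 2
    · rw [h, Mg2]
    · rw [Mg0 n h]; norm_num
  have Nadd : T.memTp 2 (f + g) ∧ T.normTp 2 (f + g) = 1 := by
    refine aux_norm_one_of T (f + g) (fun n => ?_) 1 kadd.2.1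
    by_cases h : n = 1
    · rw [h, kadd.2.1]
    · by_cases h' : n = 2
      · rw [h', kadd.2.2]
      · rw [kadd.1 n h h']; norm_num
  have Nsub : T.memTp 2 (f - g) ∧ T.normTp 2 (f - g) = 1 := by
    refine aux_norm_one_of T (f - g) (fun n => ?_) 1 ksub.2.1
    by_cases h : n = 1
    · rw [h, ksub.2.1]
    · by_cases h' : n = 2
      · rw [h', ksub.2.2]
      · rw [ksub.1 n h h']; norm_num
  refine ⟨Nf.1, Ng.1, Nf.2, Ng.2, Nadd.2, Nsub.2, ?_⟩
  rw [Nf.2, Ng.2, Nadd.2, Nsub.2]; norm_num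
end
end

section
/- Let T be the 2-homogeneous rooted tree (q = 1), write D_n = {a_n, b_n} for n ≥ 1, let φ be a self-map of T and let 1 ≤ p < ∞. Then C_φ is a bounded operator on T_p, and its operator norm satisfies: (1) if φ(o) ≠ o then ‖C_φ‖^p = 2; (2) if φ(o) = o then: (a) if φ ≡ o, or if for every n ≥ 1 the map φ sends D_n bijectively onto D_m for some m ≥ 1, then ‖C_φ‖^p = 1; (b) if for each n ≥ 1 exactly one element of D_n is mapped by φ to o, then ‖C_φ‖^p = 3/2; (c) if there exists n ≥ 1 with φ(a_n) = φ(b_n) ≠ o, or there exists n ≥ 1 with |φ(a_n)| ≠ |φ(b_n)| and both |φ(a_n)|, |φ(b_n)| nonzero, then ‖C_φ‖^p = 2. -/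
open scoped BigOperators Classical

noncomputable section

section TwoHomAux

variable {T : HomTree 1} {p : ℝ}

lemma hp_pos (hp : 1 ≤ p) : 0 < p := lt_of_lt_of_le one_pos hp

lemma rpow_inv_self (hp : 1 ≤ p) {x : ℝ} (hx : 0 ≤ x) : (x ^ (1/p)) ^ p = x := by
  rw [one_div, Real.rpow_inv_rpow hx (hp_pos hp).ne']

lemma self_rpow_inv (hp : 1 ≤ p) {x : ℝ} (hx : 0 ≤ x) : (x ^ p) ^ (1/p) = x := by
  rw [one_div, Real.rpow_rpow_inv hx (hp_pos hp).ne']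

lemma treeC_one {n : ℕ} (hn : 1 ≤ n) : treeC 1 n = 2 := by
  simp [treeC, Nat.one_le_iff_ne_zero.mp hn]

lemma treeC_pos (n : ℕ) : 0 < treeC 1 n := by
  rcases Nat.eq_zero_or_pos n with h | h
  · simp [treeC, h]
  · rw [treeC_one h]; norm_num

lemma levelFinset_zero : T.levelFinset 0 = {T.root} := by
  ext v
  simp [HomTree.levelFinset, Set.Finite.mem_toFinset, T.level_eq_zero_iff]

lemma levelFinset_pair {a b : ℕ → T.V}
    (hab : ∀ n : ℕ, 1 ≤ n → a n ≠ b n ∧ {v : T.V | T.level v = n} = {a n, b n})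
    {n : ℕ} (hn : 1 ≤ n) : T.levelFinset n = {a n, b n} := by
  ext v
  have h : v ∈ {v : T.V | T.level v = n} ↔ v ∈ ({a n, b n} : Set T.V) := by
    rw [(hab n hn).2]
  simp only [HomTree.levelFinset, Set.Finite.mem_toFinset] at *
  simpa [Set.mem_insert_iff] using h

lemma level_a {a b : ℕ → T.V}
    (hab : ∀ n : ℕ, 1 ≤ n → a n ≠ b n ∧ {v : T.V | T.level v = n} = {a n, b n})
    {n : ℕ} (hn : 1 ≤ n) : T.level (a n) = n := by
  have : a n ∈ {v : T.V | T.level v = n} := by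
    rw [(hab n hn).2]; left; rfl
  exact this

lemma level_b {a b : ℕ → T.V}
    (hab : ∀ n : ℕ, 1 ≤ n → a n ≠ b n ∧ {v : T.V | T.level v = n} = {a n, b n})
    {n : ℕ} (hn : 1 ≤ n) : T.level (b n) = n := by
  have : b n ∈ {v : T.V | T.level v = n} := by
    rw [(hab n hn).2]; right; rfl
  exact this

lemma inner_nonneg (f : T.V → ℂ) (n : ℕ) :
    0 ≤ (1 / (treeC 1 n : ℝ)) * ∑ v ∈ T.levelFinset n, ‖(f v)‖ ^ p := by
  apply mul_nonneg (by positivity)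
  exact Finset.sum_nonneg fun v _ => Real.rpow_nonneg (norm_nonneg _) _

lemma Mp_nonneg (f : T.V → ℂ) (n : ℕ) : 0 ≤ T.Mp p n f :=
  Real.rpow_nonneg (inner_nonneg f n) _

lemma Mp_zero (hp : 1 ≤ p) (f : T.V → ℂ) : T.Mp p 0 f = ‖(f T.root)‖ := by
  have h0 : treeC 1 0 = 1 := rfl
  rw [HomTree.Mp, levelFinset_zero, Finset.sum_singleton, h0, Nat.cast_one, div_one, one_mul]
  exact self_rpow_inv hp (norm_nonneg _)

lemma Mp_pair {a b : ℕ → T.V}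
    (hab : ∀ n : ℕ, 1 ≤ n → a n ≠ b n ∧ {v : T.V | T.level v = n} = {a n, b n})
    {n : ℕ} (hn : 1 ≤ n) (f : T.V → ℂ) :
    T.Mp p n f
      = ((1/2) * (‖(f (a n))‖ ^ p + ‖(f (b n))‖ ^ p)) ^ (1/p) := by
  rw [HomTree.Mp, levelFinset_pair hab hn, Finset.sum_pair (hab n hn).1, treeC_one hn]
  norm_num

lemma Mp_rpow {a b : ℕ → T.V} (hp : 1 ≤ p)
    (hab : ∀ n : ℕ, 1 ≤ n → a n ≠ b n ∧ {v : T.V | T.level v = n} = {a n, b n})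
    {n : ℕ} (hn : 1 ≤ n) (f : T.V → ℂ) :
    (T.Mp p n f) ^ p = (1/2) * (‖(f (a n))‖ ^ p + ‖(f (b n))‖ ^ p) := by
  rw [Mp_pair hab hn]
  exact rpow_inv_self hp (by positivity)

lemma memTp_norm_le {g : T.V → ℂ} {t : ℝ} (ht : ∀ k, T.Mp p k g ≤ t) :
    T.memTp p g ∧ T.normTp p g ≤ t := by
  have hb : BddAbove (Set.range fun n => T.Mp p n g) := ⟨t, by rintro x ⟨k, rfl⟩; exact ht k⟩
  exact ⟨hb, ciSup_le ht⟩

lemma normTp_eq {g : T.V → ℂ} {t : ℝ} (ht : ∀ k, T.Mp p k g ≤ t)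
    {k0 : ℕ} (hk0 : T.Mp p k0 g = t) : T.memTp p g ∧ T.normTp p g = t := by
  have hb : BddAbove (Set.range fun n => T.Mp p n g) := ⟨t, by rintro x ⟨k, rfl⟩; exact ht k⟩
  exact ⟨hb, le_antisymm (ciSup_le ht) (hk0 ▸ le_ciSup hb k0)⟩

lemma normTp_nonneg {g : T.V → ℂ} (hg : T.memTp p g) : 0 ≤ T.normTp p g :=
  le_trans (Mp_nonneg g 0) (le_ciSup hg 0)

lemma abs_rpow_le {a b : ℕ → T.V} (hp : 1 ≤ p)
    (hab : ∀ n : ℕ, 1 ≤ n → a n ≠ b n ∧ {v : T.V | T.level v = n} = {a n, b n})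
    {f : T.V → ℂ} (hf : T.memTp p f) (w : T.V) :
    ‖(f w)‖ ^ p ≤ 2 * (T.normTp p f) ^ p := by
  have hN : 0 ≤ T.normTp p f := normTp_nonneg hf
  have hMp : ∀ k, (T.Mp p k f) ^ p ≤ (T.normTp p f) ^ p := fun k =>
    Real.rpow_le_rpow (Mp_nonneg f k) (le_ciSup hf k) (hp_pos hp).le
  rcases Nat.eq_zero_or_pos (T.level w) with h0 | h1
  · have hw : w = T.root := (T.level_eq_zero_iff w).1 h0
    have : ‖(f w)‖ ^ p = (T.Mp p 0 f) ^ p := by rw [Mp_zero hp, hw]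
    rw [this]
    calc (T.Mp p 0 f) ^ p ≤ (T.normTp p f) ^ p := hMp 0
      _ ≤ 2 * (T.normTp p f) ^ p := by nlinarith [Real.rpow_nonneg hN p]
  · set n := T.level w with hn
    have hw : w ∈ ({a n, b n} : Set T.V) := by rw [← (hab n h1).2]; exact hn.symm
    have key : ‖(f w)‖ ^ p
        ≤ ‖(f (a n))‖ ^ p + ‖(f (b n))‖ ^ p := by
      rcases hw with hw | hw <;> rw [hw]
      · nlinarith [Real.rpow_nonneg (norm_nonneg (f (b n))) p]
      · nlinarith [Real.rpow_nonneg (norm_nonneg (f (a n))) p]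
    have := Mp_rpow hp hab h1 f
    calc ‖(f w)‖ ^ p ≤ 2 * (T.Mp p n f) ^ p := by rw [this]; linarith
      _ ≤ 2 * (T.normTp p f) ^ p := by nlinarith [hMp n]

lemma Mp_comp_le {a b : ℕ → T.V} (hp : 1 ≤ p)
    (hab : ∀ n : ℕ, 1 ≤ n → a n ≠ b n ∧ {v : T.V | T.level v = n} = {a n, b n})
    {f : T.V → ℂ} (phi : T.V → T.V) (hf : T.memTp p f) (n : ℕ) :
    T.Mp p n (f ∘ phi) ≤ (2:ℝ) ^ (1/p) * T.normTp p f := by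
  set N := T.normTp p f with hNdef
  have hN : 0 ≤ N := normTp_nonneg hf
  have hc : (0:ℝ) < (treeC 1 n : ℝ) := by exact_mod_cast treeC_pos n
  have key : (1 / (treeC 1 n : ℝ)) * ∑ v ∈ T.levelFinset n, ‖((f ∘ phi) v)‖ ^ p
      ≤ 2 * N ^ p := by
    have hsum : ∑ v ∈ T.levelFinset n, ‖((f ∘ phi) v)‖ ^ p
        ≤ ∑ _v ∈ T.levelFinset n, 2 * N ^ p :=
      Finset.sum_le_sum fun v _ => abs_rpow_le hp hab hf (phi v)
    rw [Finset.sum_const] at hsum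
    have hcard : (T.levelFinset n).card = treeC 1 n := T.card_level n
    rw [hcard, nsmul_eq_mul] at hsum
    calc (1 / (treeC 1 n : ℝ)) * ∑ v ∈ T.levelFinset n, ‖((f ∘ phi) v)‖ ^ p
        ≤ (1 / (treeC 1 n : ℝ)) * ((treeC 1 n : ℝ) * (2 * N ^ p)) := by
          apply mul_le_mul_of_nonneg_left hsum (by positivity)
      _ = 2 * N ^ p := by field_simp
  have : T.Mp p n (f ∘ phi) ≤ (2 * N ^ p) ^ (1/p) :=
    Real.rpow_le_rpow (inner_nonneg _ n) key (by positivity)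
  calc T.Mp p n (f ∘ phi) ≤ (2 * N ^ p) ^ (1/p) := this
    _ = (2:ℝ) ^ (1/p) * N := by
        rw [Real.mul_rpow (by norm_num) (Real.rpow_nonneg hN p), self_rpow_inv hp hN]

lemma Mp_const_one (hp : 1 ≤ p) (n : ℕ) : T.Mp p n (fun _ => (1:ℂ)) = 1 := by
  have hc : ((treeC 1 n : ℕ) : ℝ) ≠ 0 := by
    exact_mod_cast (treeC_pos n).ne'
  rw [HomTree.Mp]
  have : ∑ v ∈ T.levelFinset n, ‖((1:ℂ))‖ ^ p
      = (treeC 1 n : ℝ) := by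
    simp [Real.one_rpow]
    exact T.card_level n
  rw [this, one_div, inv_mul_cancel₀ hc, Real.one_rpow]

lemma opNorm_eq {phi : T.V → T.V} {t : ℝ}
    (hmem : ∃ f : T.V → ℂ, T.memTp p f ∧ T.normTp p f = 1 ∧ T.normTp p (f ∘ phi) = t)
    (hub : ∀ f : T.V → ℂ, T.memTp p f → T.normTp p f = 1 → T.normTp p (f ∘ phi) ≤ t) :
    T.opNormTp p phi = t := by
  obtain ⟨f, hf1, hf2, hf3⟩ := hmem
  have hS : t ∈ {x : ℝ | ∃ f : T.V → ℂ, T.memTp p f ∧ T.normTp p f = 1 ∧ x = T.normTp p (f ∘ phi)} :=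
    ⟨f, hf1, hf2, hf3.symm⟩
  apply le_antisymm
  · apply csSup_le ⟨t, hS⟩
    rintro x ⟨g, hg1, hg2, rfl⟩
    exact hub g hg1 hg2
  · apply le_csSup ⟨t, ?_⟩ hS
    rintro x ⟨g, hg1, hg2, rfl⟩
    exact hub g hg1 hg2

lemma Mp_le_one {a b : ℕ → T.V} (hp : 1 ≤ p)
    (hab : ∀ n : ℕ, 1 ≤ n → a n ≠ b n ∧ {v : T.V | T.level v = n} = {a n, b n})
    {f : T.V → ℂ} {n : ℕ} (hn : 1 ≤ n)
    (h : ‖(f (a n))‖ ^ p + ‖(f (b n))‖ ^ p ≤ 2) : T.Mp p n f ≤ 1 := by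
  rw [Mp_pair hab hn]
  have h0 : (0:ℝ) ≤ (1/2) * (‖(f (a n))‖ ^ p + ‖(f (b n))‖ ^ p) := by
    have := Real.rpow_nonneg (norm_nonneg (f (a n))) p
    have := Real.rpow_nonneg (norm_nonneg (f (b n))) p
    linarith
  calc ((1/2) * (‖(f (a n))‖ ^ p + ‖(f (b n))‖ ^ p)) ^ (1/p)
      ≤ (1:ℝ) ^ (1/p) := Real.rpow_le_rpow h0 (by linarith) (by positivity)
    _ = 1 := Real.one_rpow _

lemma Mp_eq_one {a b : ℕ → T.V}
    (hab : ∀ n : ℕ, 1 ≤ n → a n ≠ b n ∧ {v : T.V | T.level v = n} = {a n, b n})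
    {f : T.V → ℂ} {n : ℕ} (hn : 1 ≤ n)
    (h : ‖(f (a n))‖ ^ p + ‖(f (b n))‖ ^ p = 2) : T.Mp p n f = 1 := by
  rw [Mp_pair hab hn, h]
  norm_num

lemma level_root (T : HomTree 1) : T.level T.root = 0 := (T.level_eq_zero_iff T.root).2 rfl

lemma abs_c (hp : 1 ≤ p) : ‖((((2:ℝ) ^ (1/p) : ℝ)) : ℂ)‖ = (2:ℝ) ^ (1/p) := by
  rw [Complex.norm_real, Real.norm_of_nonneg (Real.rpow_nonneg (by norm_num) _)]

lemma abs_c_rpow (hp : 1 ≤ p) : ‖((((2:ℝ) ^ (1/p) : ℝ)) : ℂ)‖ ^ p = 2 := by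
  rw [abs_c hp, rpow_inv_self hp (by norm_num)]

lemma abs_zero_rpow (hp : 1 ≤ p) : ‖(0:ℂ)‖ ^ p = 0 := by
  simp [Real.zero_rpow (hp_pos hp).ne']

lemma abs_one_rpow : ‖(1:ℂ)‖ ^ p = 1 := by simp

/-- Construction A: the normalized point mass at a vertex `w` of level `m ≥ 1`. -/
lemma constrA {a b : ℕ → T.V} (hp : 1 ≤ p)
    (hab : ∀ n : ℕ, 1 ≤ n → a n ≠ b n ∧ {v : T.V | T.level v = n} = {a n, b n})
    {w : T.V} {m : ℕ} (hm : 1 ≤ m) (hw : T.level w = m) :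
    ∃ f : T.V → ℂ, T.memTp p f ∧ T.normTp p f = 1 ∧
      ‖(f w)‖ ^ p = 2 ∧ ‖(f w)‖ = (2:ℝ) ^ (1/p) ∧
      ∀ v, v ≠ w → f v = 0 := by
  classical
  set f : T.V → ℂ := fun v => if v = w then (((2:ℝ) ^ (1/p) : ℝ) : ℂ) else 0 with hf
  have hfw : f w = (((2:ℝ) ^ (1/p) : ℝ) : ℂ) := if_pos rfl
  have hfv : ∀ v, v ≠ w → f v = 0 := fun v hv => if_neg hv
  have hval : ∀ v, ‖(f v)‖ ^ p = if v = w then 2 else 0 := by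
    intro v
    by_cases hv : v = w
    · rw [if_pos hv, hv, hfw, abs_c_rpow hp]
    · rw [if_neg hv, hfv v hv, abs_zero_rpow hp]
  have hroot : T.root ≠ w := by
    intro h
    rw [← h, level_root T] at hw
    omega
  have hub : ∀ k, T.Mp p k f ≤ 1 := by
    intro k
    rcases Nat.eq_zero_or_pos k with rfl | hk
    · rw [Mp_zero hp, hfv T.root hroot]
      simp
    · apply Mp_le_one hp hab hk
      rw [hval, hval]
      by_cases h1 : a k = w
      · have h2 : b k ≠ w := fun h => (hab k hk).1 (h1.trans h.symm)
        rw [if_pos h1, if_neg h2]; norm_num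
      · rw [if_neg h1]
        split <;> norm_num
  have hwmem : w ∈ ({a m, b m} : Set T.V) := by
    rw [← (hab m hm).2]; exact hw
  have heq : T.Mp p m f = 1 := by
    apply Mp_eq_one hab hm
    rw [hval, hval]
    rcases hwmem with hwa | hwb
    · have h2 : b m ≠ w := fun h => (hab m hm).1 (hwa.symm.trans h.symm)
      rw [if_pos hwa.symm, if_neg h2]; norm_num
    · have h1 : a m ≠ w := fun h => (hab m hm).1 (h.trans hwb)
      rw [if_neg h1, if_pos hwb.symm]; norm_num
  obtain ⟨hmem, hnorm⟩ := normTp_eq hub heq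
  exact ⟨f, hmem, hnorm, by rw [hfw]; exact abs_c_rpow hp, by rw [hfw]; exact abs_c hp, hfv⟩

/-- Construction B: normalized point masses at two vertices on distinct nonzero levels. -/
lemma constrB {a b : ℕ → T.V} (hp : 1 ≤ p)
    (hab : ∀ n : ℕ, 1 ≤ n → a n ≠ b n ∧ {v : T.V | T.level v = n} = {a n, b n})
    {w1 w2 : T.V} {m1 m2 : ℕ} (hm1 : 1 ≤ m1) (hm2 : 1 ≤ m2) (hne : m1 ≠ m2)
    (hw1 : T.level w1 = m1) (hw2 : T.level w2 = m2) :
    ∃ f : T.V → ℂ, T.memTp p f ∧ T.normTp p f = 1 ∧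
      ‖(f w1)‖ ^ p = 2 ∧ ‖(f w2)‖ ^ p = 2 := by
  classical
  set f : T.V → ℂ := fun v => if v = w1 ∨ v = w2 then (((2:ℝ) ^ (1/p) : ℝ) : ℂ) else 0 with hf
  have hval : ∀ v, ‖(f v)‖ ^ p = if v = w1 ∨ v = w2 then 2 else 0 := by
    intro v
    by_cases hv : v = w1 ∨ v = w2
    · rw [if_pos hv]
      show ‖(if v = w1 ∨ v = w2 then (((2:ℝ) ^ (1/p) : ℝ) : ℂ) else 0)‖ ^ p = 2
      rw [if_pos hv, abs_c_rpow hp]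
    · rw [if_neg hv]
      show ‖(if v = w1 ∨ v = w2 then (((2:ℝ) ^ (1/p) : ℝ) : ℂ) else 0)‖ ^ p = 0
      rw [if_neg hv, abs_zero_rpow hp]
  have hlevel : ∀ v : T.V, v = w1 ∨ v = w2 → T.level v ≠ 0 := by
    rintro v (rfl | rfl)
    · omega
    · omega
  have hroot : ¬ (T.root = w1 ∨ T.root = w2) := by
    intro h
    exact hlevel T.root h (level_root T)
  have honce : ∀ k, 1 ≤ k → (a k = w1 ∨ a k = w2) → ¬ (b k = w1 ∨ b k = w2) := by
    rintro k hk (rfl | rfl) (h | h)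
    · exact (hab k hk).1 h.symm
    · have : k = m1 := by rw [← hw1, level_a hab hk]
      have : k = m2 := by rw [← hw2, ← h, level_b hab hk]
      omega
    · have : k = m2 := by rw [← hw2, level_a hab hk]
      have : k = m1 := by rw [← hw1, ← h, level_b hab hk]
      omega
    · exact (hab k hk).1 h.symm
  have hub : ∀ k, T.Mp p k f ≤ 1 := by
    intro k
    rcases Nat.eq_zero_or_pos k with rfl | hk
    · rw [Mp_zero hp]
      have : f T.root = 0 := if_neg hroot
      simp [this]
    · apply Mp_le_one hp hab hk
      rw [hval, hval]
      by_cases h1 : a k = w1 ∨ a k = w2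
      · rw [if_pos h1, if_neg (honce k hk h1)]; norm_num
      · rw [if_neg h1]; split <;> norm_num
  have hw1mem : w1 ∈ ({a m1, b m1} : Set T.V) := by
    rw [← (hab m1 hm1).2]; exact hw1
  have heq : T.Mp p m1 f = 1 := by
    apply Mp_eq_one hab hm1
    rw [hval, hval]
    rcases hw1mem with hwa | hwb
    · have h2 : ¬ (b m1 = w1 ∨ b m1 = w2) := by
        rintro (h | h)
        · exact (hab m1 hm1).1 (hwa.symm.trans h.symm)
        · have : m1 = m2 := by rw [← hw2, ← h, level_b hab hm1]
          exact hne this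
      rw [if_pos (Or.inl hwa.symm), if_neg h2]; norm_num
    · have h1 : ¬ (a m1 = w1 ∨ a m1 = w2) := by
        rintro (h | h)
        · exact (hab m1 hm1).1 (h.trans hwb)
        · have : m1 = m2 := by rw [← hw2, ← h, level_a hab hm1]
          exact hne this
      rw [if_neg h1, if_pos (Or.inl hwb.symm)]; norm_num
  obtain ⟨hmem, hnorm⟩ := normTp_eq hub heq
  refine ⟨f, hmem, hnorm, ?_, ?_⟩
  · rw [hval]; simp
  · rw [hval]; simp

/-- Construction C: value 1 at the root and a normalized point mass at `w` of level `m ≥ 1`. -/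
lemma constrC {a b : ℕ → T.V} (hp : 1 ≤ p)
    (hab : ∀ n : ℕ, 1 ≤ n → a n ≠ b n ∧ {v : T.V | T.level v = n} = {a n, b n})
    {w : T.V} {m : ℕ} (hm : 1 ≤ m) (hw : T.level w = m) :
    ∃ f : T.V → ℂ, T.memTp p f ∧ T.normTp p f = 1 ∧
      ‖(f w)‖ ^ p = 2 ∧ ‖(f T.root)‖ ^ p = 1 := by
  classical
  set f : T.V → ℂ := fun v => if v = w then (((2:ℝ) ^ (1/p) : ℝ) : ℂ)
    else if v = T.root then 1 else 0 with hf
  have hroot : T.root ≠ w := by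
    intro h
    rw [← h, level_root T] at hw
    omega
  have hvalw : ‖(f w)‖ ^ p = 2 := by
    show ‖(if w = w then (((2:ℝ) ^ (1/p) : ℝ) : ℂ) else _)‖ ^ p = 2
    rw [if_pos rfl, abs_c_rpow hp]
  have hvalr : ‖(f T.root)‖ ^ p = 1 := by
    show ‖(if T.root = w then _ else if T.root = T.root then (1:ℂ) else 0)‖ ^ p = 1
    rw [if_neg hroot, if_pos rfl, abs_one_rpow]
  have hval0 : ∀ v, v ≠ w → v ≠ T.root → ‖(f v)‖ ^ p = 0 := by
    intro v h1 h2
    show ‖(if v = w then _ else if v = T.root then (1:ℂ) else 0)‖ ^ p = 0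
    rw [if_neg h1, if_neg h2, abs_zero_rpow hp]
  have hub : ∀ k, T.Mp p k f ≤ 1 := by
    intro k
    rcases Nat.eq_zero_or_pos k with rfl | hk
    · rw [Mp_zero hp]
      have : ‖(f T.root)‖ = 1 := by
        calc ‖(f T.root)‖ = (‖(f T.root)‖ ^ p) ^ (1/p) :=
              (self_rpow_inv hp (norm_nonneg _)).symm
          _ = 1 := by rw [hvalr, Real.one_rpow]
      rw [this]
    · apply Mp_le_one hp hab hk
      have har : a k ≠ T.root := by
        intro h
        have hlv := level_a hab hk
        rw [h, level_root T] at hlv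
        omega
      have hbr : b k ≠ T.root := by
        intro h
        have hlv := level_b hab hk
        rw [h, level_root T] at hlv
        omega
      by_cases h1 : a k = w
      · have h2 : b k ≠ w := fun h => (hab k hk).1 (h1.trans h.symm)
        rw [h1, hvalw, hval0 (b k) h2 hbr]
        norm_num
      · rw [hval0 (a k) h1 har]
        by_cases h2 : b k = w
        · rw [h2, hvalw]; norm_num
        · rw [hval0 (b k) h2 hbr]; norm_num
  have heq : T.Mp p 0 f = 1 := by
    rw [Mp_zero hp]
    calc ‖(f T.root)‖ = (‖(f T.root)‖ ^ p) ^ (1/p) :=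
          (self_rpow_inv hp (norm_nonneg _)).symm
      _ = 1 := by rw [hvalr, Real.one_rpow]
  obtain ⟨hmem, hnorm⟩ := normTp_eq hub heq
  exact ⟨f, hmem, hnorm, hvalw, hvalr⟩

lemma Mp_le_normTp {f : T.V → ℂ} (hf : T.memTp p f) (k : ℕ) :
    T.Mp p k f ≤ T.normTp p f := le_ciSup hf k

end TwoHomAux

/-- On the 2-homogeneous tree (`q = 1`, levels `D_n = {a n, b n}` for `n ≥ 1`), every
self-map `φ` induces a bounded `C_φ` on `T_p` (`1 ≤ p < ∞`), with the stated norms. -/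
theorem bounded_comp_Tp_two_homogeneous (T : HomTree 1) (p : ℝ) (hp : 1 ≤ p)
    (a b : ℕ → T.V)
    (hab : ∀ n : ℕ, 1 ≤ n → a n ≠ b n ∧ {v : T.V | T.level v = n} = {a n, b n})
    (phi : T.V → T.V) :
    T.BoundedCompTp p phi ∧
    (phi T.root ≠ T.root → T.opNormTp p phi ^ p = 2) ∧
    (phi T.root = T.root →
      (((∀ v, phi v = T.root) ∨
          (∀ n : ℕ, 1 ≤ n → ∃ m : ℕ, 1 ≤ m ∧
            Set.BijOn phi {v : T.V | T.level v = n} {v : T.V | T.level v = m})) →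
        T.opNormTp p phi ^ p = 1) ∧
      ((∀ n : ℕ, 1 ≤ n →
          (phi (a n) = T.root ∧ phi (b n) ≠ T.root) ∨
          (phi (a n) ≠ T.root ∧ phi (b n) = T.root)) →
        T.opNormTp p phi ^ p = 3 / 2) ∧
      (((∃ n : ℕ, 1 ≤ n ∧ phi (a n) = phi (b n) ∧ phi (a n) ≠ T.root) ∨
          (∃ n : ℕ, 1 ≤ n ∧ T.level (phi (a n)) ≠ T.level (phi (b n)) ∧
            T.level (phi (a n)) ≠ 0 ∧ T.level (phi (b n)) ≠ 0)) →
        T.opNormTp p phi ^ p = 2)) := by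
  have hp0 : 0 < p := hp_pos hp
  have hboundMp : ∀ (f : T.V → ℂ), T.memTp p f → ∀ n,
      T.Mp p n (f ∘ phi) ≤ (2:ℝ) ^ (1/p) * T.normTp p f :=
    fun f hf n => Mp_comp_le hp hab phi hf n
  have hboundMp1 : ∀ (f : T.V → ℂ), T.memTp p f → T.normTp p f = 1 → ∀ n,
      T.Mp p n (f ∘ phi) ≤ (2:ℝ) ^ (1/p) := by
    intro f hf h1 n
    have := hboundMp f hf n
    rwa [h1, mul_one] at this
  have hbdd : T.BoundedCompTp p phi := by
    refine ⟨fun f hf => (memTp_norm_le (hboundMp f hf)).1,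
      ⟨(2:ℝ) ^ (1/p), fun f hf => (memTp_norm_le (hboundMp f hf)).2⟩⟩
  have hub2 : ∀ f : T.V → ℂ, T.memTp p f → T.normTp p f = 1 →
      T.normTp p (f ∘ phi) ≤ (2:ℝ) ^ (1/p) :=
    fun f hf h1 => ciSup_le (hboundMp1 f hf h1)
  refine ⟨hbdd, ?_, ?_⟩
  · -- Case 1: phi root ≠ root
    intro hroot
    have hlw : 1 ≤ T.level (phi T.root) := by
      rcases Nat.eq_zero_or_pos (T.level (phi T.root)) with h | h
      · exact absurd ((T.level_eq_zero_iff _).1 h) hroot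
      · exact h
    obtain ⟨f, hf, hnorm, hfp, hfabs, hzero⟩ := constrA hp hab hlw rfl
    have h0 : T.Mp p 0 (f ∘ phi) = (2:ℝ) ^ (1/p) := by
      rw [Mp_zero hp]
      exact hfabs
    have hcomp : T.normTp p (f ∘ phi) = (2:ℝ) ^ (1/p) :=
      (normTp_eq (hboundMp1 f hf hnorm) h0).2
    have hop : T.opNormTp p phi = (2:ℝ) ^ (1/p) := opNorm_eq ⟨f, hf, hnorm, hcomp⟩ hub2
    rw [hop, rpow_inv_self hp (by norm_num : (0:ℝ) ≤ 2)]
  · intro hfix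
    refine ⟨?_, ?_, ?_⟩
    · -- Case 2a
      intro hcase
      have hMp1 : ∀ f : T.V → ℂ, T.memTp p f → T.normTp p f = 1 → ∀ n,
          T.Mp p n (f ∘ phi) ≤ 1 := by
        intro f hf h1 n
        have hMk : ∀ k, T.Mp p k f ≤ 1 := fun k => h1 ▸ Mp_le_normTp hf k
        have hr : ‖(f T.root)‖ ≤ 1 := by
          have := hMk 0
          rwa [Mp_zero hp f] at this
        have hrp : ‖(f T.root)‖ ^ p ≤ 1 :=
          Real.rpow_le_one (norm_nonneg _) hr hp0.le
        rcases hcase with hconst | hbij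
        · rcases Nat.eq_zero_or_pos n with rfl | hn
          · rw [Mp_zero hp]
            show ‖(f (phi T.root))‖ ≤ 1
            rw [hconst T.root]
            exact hr
          · apply Mp_le_one hp hab hn
            show ‖(f (phi (a n)))‖ ^ p + ‖(f (phi (b n)))‖ ^ p ≤ 2
            rw [hconst (a n), hconst (b n)]
            linarith
        · rcases Nat.eq_zero_or_pos n with rfl | hn
          · rw [Mp_zero hp]
            show ‖(f (phi T.root))‖ ≤ 1
            rw [hfix]
            exact hr
          · obtain ⟨m, hm, hbijn⟩ := hbij n hn
            apply Mp_le_one hp hab hn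
            have hu : phi (a n) ∈ ({a m, b m} : Set T.V) := by
              rw [← (hab m hm).2]
              exact hbijn.mapsTo (level_a hab hn)
            have hv : phi (b n) ∈ ({a m, b m} : Set T.V) := by
              rw [← (hab m hm).2]
              exact hbijn.mapsTo (level_b hab hn)
            have hinj : phi (a n) ≠ phi (b n) := fun h =>
              (hab n hn).1 (hbijn.injOn (level_a hab hn) (level_b hab hn) h)
            have hsum2 : (T.Mp p m f) ^ p ≤ 1 :=
              Real.rpow_le_one (Mp_nonneg f m) (hMk m) hp0.le
            rw [Mp_rpow hp hab hm f] at hsum2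
            show ‖(f (phi (a n)))‖ ^ p + ‖(f (phi (b n)))‖ ^ p ≤ 2
            rcases hu with h1 | h1 <;> rcases hv with h2 | h2
            · exact absurd (h1.trans h2.symm) hinj
            · rw [h1, h2]; linarith
            · rw [h1, h2]; linarith
            · exact absurd (h1.trans h2.symm) hinj
      have hub1 : ∀ f : T.V → ℂ, T.memTp p f → T.normTp p f = 1 →
          T.normTp p (f ∘ phi) ≤ 1 :=
        fun f hf h1 => ciSup_le (hMp1 f hf h1)
      obtain ⟨hmem1, hone⟩ :=
        normTp_eq (T := T) (g := fun _ : T.V => (1:ℂ))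
          (fun k => le_of_eq (Mp_const_one hp k)) (Mp_const_one hp 0)
      have hcomp : T.normTp p ((fun _ : T.V => (1:ℂ)) ∘ phi) = 1 := hone
      have hop : T.opNormTp p phi = 1 :=
        opNorm_eq ⟨fun _ => (1:ℂ), hmem1, hone, hcomp⟩ hub1
      rw [hop, Real.one_rpow]
    · -- Case 2b
      intro hcase
      have hMp32 : ∀ f : T.V → ℂ, T.memTp p f → T.normTp p f = 1 → ∀ n,
          T.Mp p n (f ∘ phi) ≤ (3/2:ℝ) ^ (1/p) := by
        intro f hf h1 n
        have habs2 : ∀ w, ‖(f w)‖ ^ p ≤ 2 := by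
          intro w
          have := abs_rpow_le hp hab hf w
          rwa [h1, Real.one_rpow, mul_one] at this
        have hr : ‖(f T.root)‖ ≤ 1 := by
          have := h1 ▸ Mp_le_normTp hf 0
          rwa [Mp_zero hp f] at this
        have hrp : ‖(f T.root)‖ ^ p ≤ 1 :=
          Real.rpow_le_one (norm_nonneg _) hr hp0.le
        have h1le : (1:ℝ) ≤ (3/2:ℝ) ^ (1/p) := by
          calc (1:ℝ) = (1:ℝ) ^ (1/p) := (Real.one_rpow _).symm
            _ ≤ (3/2:ℝ) ^ (1/p) :=
              Real.rpow_le_rpow (by norm_num) (by norm_num) (by positivity)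
        rcases Nat.eq_zero_or_pos n with rfl | hn
        · rw [Mp_zero hp]
          show ‖(f (phi T.root))‖ ≤ (3/2:ℝ) ^ (1/p)
          rw [hfix]
          exact le_trans hr h1le
        · rw [Mp_pair hab hn]
          have hx := Real.rpow_nonneg (norm_nonneg ((f ∘ phi) (a n))) p
          have hy := Real.rpow_nonneg (norm_nonneg ((f ∘ phi) (b n))) p
          apply Real.rpow_le_rpow (by linarith) ?_ (by positivity)
          rcases hcase n hn with ⟨ha, hb⟩ | ⟨ha, hb⟩
          · have h2 := habs2 (phi (b n))
            show (1/2:ℝ) * (‖(f (phi (a n)))‖ ^ p + ‖(f (phi (b n)))‖ ^ p) ≤ 3/2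
            rw [ha]
            linarith
          · have h2 := habs2 (phi (a n))
            show (1/2:ℝ) * (‖(f (phi (a n)))‖ ^ p + ‖(f (phi (b n)))‖ ^ p) ≤ 3/2
            rw [hb]
            linarith
      have hub32 : ∀ f : T.V → ℂ, T.memTp p f → T.normTp p f = 1 →
          T.normTp p (f ∘ phi) ≤ (3/2:ℝ) ^ (1/p) :=
        fun f hf h1 => ciSup_le (hMp32 f hf h1)
      -- extremal function from level 1
      have hex : ∃ u : T.V, phi u ≠ T.root ∧
          ((phi (a 1) = T.root ∧ u = b 1) ∨ (phi (b 1) = T.root ∧ u = a 1)) := by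
        rcases hcase 1 le_rfl with ⟨ha, hb⟩ | ⟨ha, hb⟩
        · exact ⟨b 1, hb, Or.inl ⟨ha, rfl⟩⟩
        · exact ⟨a 1, ha, Or.inr ⟨hb, rfl⟩⟩
      obtain ⟨u, hu, hucase⟩ := hex
      have hlw : 1 ≤ T.level (phi u) := by
        rcases Nat.eq_zero_or_pos (T.level (phi u)) with h | h
        · exact absurd ((T.level_eq_zero_iff _).1 h) hu
        · exact h
      obtain ⟨f, hf, hnorm, hfw, hfr⟩ := constrC hp hab hlw rfl
      have hMpn : T.Mp p 1 (f ∘ phi) = (3/2:ℝ) ^ (1/p) := by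
        rw [Mp_pair hab le_rfl]
        have : ‖(f (phi (a 1)))‖ ^ p + ‖(f (phi (b 1)))‖ ^ p = 3 := by
          rcases hucase with ⟨ha, rfl⟩ | ⟨hb, rfl⟩
          · rw [ha, hfr, hfw]; norm_num
          · rw [hb, hfw, hfr]; norm_num
        show ((1/2:ℝ) * (‖(f (phi (a 1)))‖ ^ p + ‖(f (phi (b 1)))‖ ^ p)) ^ (1/p)
            = (3/2:ℝ) ^ (1/p)
        rw [this]
        norm_num
      have hcomp : T.normTp p (f ∘ phi) = (3/2:ℝ) ^ (1/p) :=
        (normTp_eq (hMp32 f hf hnorm) hMpn).2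
      have hop : T.opNormTp p phi = (3/2:ℝ) ^ (1/p) :=
        opNorm_eq ⟨f, hf, hnorm, hcomp⟩ hub32
      rw [hop, rpow_inv_self hp (by norm_num : (0:ℝ) ≤ 3/2)]
    · -- Case 2c
      intro hcase
      have hkey : ∃ f : T.V → ℂ, T.memTp p f ∧ T.normTp p f = 1 ∧
          ∃ n : ℕ, 1 ≤ n ∧ ‖(f (phi (a n)))‖ ^ p = 2 ∧
            ‖(f (phi (b n)))‖ ^ p = 2 := by
        rcases hcase with ⟨n, hn, heqq, hner⟩ | ⟨n, hn, hlev, ha0, hb0⟩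
        · have hlw : 1 ≤ T.level (phi (a n)) := by
            rcases Nat.eq_zero_or_pos (T.level (phi (a n))) with h | h
            · exact absurd ((T.level_eq_zero_iff _).1 h) hner
            · exact h
          obtain ⟨f, hf, hnorm, hfp, hfabs, hzero⟩ := constrA hp hab hlw rfl
          exact ⟨f, hf, hnorm, n, hn, hfp, by rw [← heqq]; exact hfp⟩
        · have hm1 : 1 ≤ T.level (phi (a n)) := Nat.one_le_iff_ne_zero.2 ha0
          have hm2 : 1 ≤ T.level (phi (b n)) := Nat.one_le_iff_ne_zero.2 hb0
          obtain ⟨f, hf, hnorm, hf1, hf2⟩ := constrB hp hab hm1 hm2 hlev rfl rfl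
          exact ⟨f, hf, hnorm, n, hn, hf1, hf2⟩
      obtain ⟨f, hf, hnorm, n, hn, h1, h2⟩ := hkey
      have hMpn : T.Mp p n (f ∘ phi) = (2:ℝ) ^ (1/p) := by
        rw [Mp_pair hab hn]
        show ((1/2:ℝ) * (‖(f (phi (a n)))‖ ^ p + ‖(f (phi (b n)))‖ ^ p)) ^ (1/p)
            = (2:ℝ) ^ (1/p)
        rw [h1, h2]
        norm_num
      have hcomp : T.normTp p (f ∘ phi) = (2:ℝ) ^ (1/p) :=
        (normTp_eq (hboundMp1 f hf hnorm) hMpn).2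
      have hop : T.opNormTp p phi = (2:ℝ) ^ (1/p) :=
        opNorm_eq ⟨f, hf, hnorm, hcomp⟩ hub2
      rw [hop, rpow_inv_self hp (by norm_num : (0:ℝ) ≤ 2)]
end
end

section
/- Let T be the (q+1)-homogeneous rooted tree, q ≥ 1, let 1 ≤ p < ∞ and let φ be a self-map of T. Then the composition operator C_φ is bounded on T_p if and only if α := sup_{n ≥ 0} (1/c_n) Σ_{m=0}^∞ N_{m,n} c_m < ∞. Moreover, in that case ‖C_φ‖^p = α. -/
open scoped BigOperators Classical

noncomputable section

namespace TpAux

open Finset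

variable {q : ℕ} (T : HomTree q)

lemma treeC_pos (hq : 1 ≤ q) (n : ℕ) : 0 < treeC q n := by
  unfold treeC
  split
  · exact one_pos
  · exact Nat.mul_pos (Nat.succ_pos q) (pow_pos hq _)

lemma mem_levelFinset {v : T.V} {n : ℕ} : v ∈ T.levelFinset n ↔ T.level v = n := by
  simp [HomTree.levelFinset, Set.Finite.mem_toFinset]

lemma levelFinset_nonempty (hq : 1 ≤ q) (n : ℕ) : (T.levelFinset n).Nonempty := by
  rw [← Finset.card_pos, HomTree.levelFinset, T.card_level]
  exact treeC_pos hq n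

def suppF (phi : T.V → T.V) (n : ℕ) : Finset ℕ :=
  (T.levelFinset n).image fun v => T.level (phi v)

lemma Nmax_eq_zero {phi : T.V → T.V} {m n : ℕ} (hm : m ∉ suppF T phi n) :
    T.Nmax phi m n = 0 := by
  rw [HomTree.Nmax, ← Nat.bot_eq_zero, Finset.sup_eq_bot_iff]
  intro w hw
  rw [Nat.bot_eq_zero, HomTree.Nphi, Finset.card_eq_zero, Finset.filter_eq_empty_iff]
  intro v hv hvw
  exact hm (Finset.mem_image.2 ⟨v, hv, by rw [hvw, (mem_levelFinset T).1 hw]⟩)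

lemma tsum_eq (phi : T.V → T.V) (n : ℕ) :
    (∑' m : ℕ, (T.Nmax phi m n : ℝ) * (treeC q m : ℝ)) =
      ∑ m ∈ suppF T phi n, (T.Nmax phi m n : ℝ) * (treeC q m : ℝ) :=
  tsum_eq_sum (fun m hm => by rw [Nmax_eq_zero T hm]; simp)

end TpAux
namespace TpAux
open Finset
variable {q : ℕ} (T : HomTree q)

lemma sum_comp_le (phi : T.V → T.V) (n : ℕ) (g : T.V → ℝ) (hg : ∀ v, 0 ≤ g v) :
    ∑ v ∈ T.levelFinset n, g (phi v) ≤
      ∑ m ∈ suppF T phi n, (T.Nmax phi m n : ℝ) * ∑ w ∈ T.levelFinset m, g w := by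
  rw [← Finset.sum_fiberwise_of_maps_to
      (g := fun v => T.level (phi v)) (t := suppF T phi n)
      (fun v hv => Finset.mem_image_of_mem _ hv) (fun v => g (phi v))]
  refine Finset.sum_le_sum fun m hm => ?_
  set s := (T.levelFinset n).filter (fun v => T.level (phi v) = m) with hs
  have himg : s.image phi ⊆ T.levelFinset m := by
    intro w hw
    obtain ⟨v, hv, rfl⟩ := Finset.mem_image.1 hw
    exact (mem_levelFinset T).2 (Finset.mem_filter.1 hv).2
  calc ∑ v ∈ s, g (phi v)
      = ∑ w ∈ s.image phi, ∑ v ∈ s.filter (fun v => phi v = w), g (phi v) :=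
        (Finset.sum_fiberwise_of_maps_to (fun v hv => Finset.mem_image_of_mem _ hv) _).symm
    _ = ∑ w ∈ s.image phi, ((s.filter (fun v => phi v = w)).card : ℝ) * g w := by
        refine Finset.sum_congr rfl fun w _ => ?_
        rw [Finset.sum_congr rfl (fun v hv => by rw [(Finset.mem_filter.1 hv).2]),
          Finset.sum_const, nsmul_eq_mul]
    _ ≤ ∑ w ∈ s.image phi, (T.Nmax phi m n : ℝ) * g w := by
        refine Finset.sum_le_sum fun w hw => ?_
        refine mul_le_mul_of_nonneg_right ?_ (hg w)
        have h1 : (s.filter (fun v => phi v = w)).card ≤ T.Nphi phi n w :=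
          Finset.card_le_card (fun v hv => by
            rw [Finset.mem_filter] at *
            exact ⟨(Finset.mem_filter.1 hv.1).1, hv.2⟩)
        have h2 : T.Nphi phi n w ≤ T.Nmax phi m n := Finset.le_sup (himg hw)
        exact_mod_cast h1.trans h2
    _ ≤ ∑ w ∈ T.levelFinset m, (T.Nmax phi m n : ℝ) * g w :=
        Finset.sum_le_sum_of_subset_of_nonneg himg
          (fun w _ _ => mul_nonneg (Nat.cast_nonneg _) (hg w))
    _ = _ := by rw [← Finset.mul_sum]

lemma le_sum_comp (phi : T.V → T.V) (n : ℕ) (g : T.V → ℝ) (hg : ∀ v, 0 ≤ g v)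
    (wsel : ℕ → T.V) (hlev : ∀ m, T.level (wsel m) = m)
    (hval : ∀ m, g (wsel m) = (treeC q m : ℝ)) :
    ∑ m ∈ suppF T phi n, (T.Nphi phi n (wsel m) : ℝ) * (treeC q m : ℝ) ≤
      ∑ v ∈ T.levelFinset n, g (phi v) := by
  rw [← Finset.sum_fiberwise_of_maps_to
      (g := fun v => T.level (phi v)) (t := suppF T phi n)
      (fun v hv => Finset.mem_image_of_mem _ hv) (fun v => g (phi v))]
  refine Finset.sum_le_sum fun m hm => ?_
  have hsub : (T.levelFinset n).filter (fun v => phi v = wsel m) ⊆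
      (T.levelFinset n).filter (fun v => T.level (phi v) = m) := by
    intro v hv
    rw [Finset.mem_filter] at *
    exact ⟨hv.1, by rw [hv.2, hlev]⟩
  calc (T.Nphi phi n (wsel m) : ℝ) * (treeC q m : ℝ)
      = ∑ v ∈ (T.levelFinset n).filter (fun v => phi v = wsel m), g (phi v) := by
        rw [Finset.sum_congr rfl (fun v hv => by
          rw [(Finset.mem_filter.1 hv).2, hval]),
          Finset.sum_const, nsmul_eq_mul, HomTree.Nphi]
    _ ≤ _ := Finset.sum_le_sum_of_subset_of_nonneg hsub (fun v _ _ => hg _)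

end TpAux
namespace TpAux
open Finset
variable {q : ℕ} (T : HomTree q)

variable {p : ℝ}

lemma rpow_invp_p (hp : 1 ≤ p) {x : ℝ} (hx : 0 ≤ x) : (x ^ (1 / p)) ^ p = x := by
  rw [← Real.rpow_mul hx, one_div_mul_cancel (by linarith : p ≠ 0), Real.rpow_one]

lemma rpow_p_invp (hp : 1 ≤ p) {x : ℝ} (hx : 0 ≤ x) : (x ^ p) ^ (1 / p) = x := by
  rw [← Real.rpow_mul hx, mul_one_div_cancel (by linarith : p ≠ 0), Real.rpow_one]

lemma sum_abs_nonneg (n : ℕ) (f : T.V → ℂ) :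
    0 ≤ (1 / (treeC q n : ℝ)) * ∑ v ∈ T.levelFinset n, ‖f v‖ ^ p := by
  refine mul_nonneg (by positivity) (Finset.sum_nonneg fun v _ => ?_)
  exact Real.rpow_nonneg (norm_nonneg _) _

lemma Mp_nonneg (n : ℕ) (f : T.V → ℂ) : 0 ≤ T.Mp p n f :=
  Real.rpow_nonneg (sum_abs_nonneg T n f) _

lemma Mp_pow (hp : 1 ≤ p) (n : ℕ) (f : T.V → ℂ) :
    T.Mp p n f ^ p =
      (1 / (treeC q n : ℝ)) * ∑ v ∈ T.levelFinset n, ‖f v‖ ^ p :=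
  rpow_invp_p hp (sum_abs_nonneg T n f)

lemma normTp_nonneg (f : T.V → ℂ) : 0 ≤ T.normTp p f :=
  Real.iSup_nonneg fun n => Mp_nonneg T n f

lemma Mp_le_normTp (hm : T.memTp p f) (n : ℕ) : T.Mp p n f ≤ T.normTp p f :=
  le_ciSup hm n

end TpAux
namespace TpAux
open Finset
variable {q : ℕ} (T : HomTree q) {p : ℝ}

/-- `a n` from the statement. -/
def aSeq (phi : T.V → T.V) (n : ℕ) : ℝ :=
  (1 / (treeC q n : ℝ)) * ∑' m : ℕ, (T.Nmax phi m n : ℝ) * (treeC q m : ℝ)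

lemma aSeq_nonneg (phi : T.V → T.V) (n : ℕ) : 0 ≤ aSeq T phi n := by
  refine mul_nonneg (by positivity) (tsum_nonneg fun m => ?_)
  positivity

/-- Core upper estimate. -/
lemma Mp_comp_pow_le (hq : 1 ≤ q) (hp : 1 ≤ p) (phi : T.V → T.V) {f : T.V → ℂ}
    (hf : T.memTp p f) (n : ℕ) :
    T.Mp p n (f ∘ phi) ^ p ≤ aSeq T phi n * T.normTp p f ^ p := by
  have hg : ∀ v, 0 ≤ ‖f v‖ ^ p := fun v =>
    Real.rpow_nonneg (norm_nonneg _) _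
  have hnorm : 0 ≤ T.normTp p f := normTp_nonneg T f
  have key : ∀ m : ℕ, ∑ w ∈ T.levelFinset m, ‖f w‖ ^ p ≤
      (treeC q m : ℝ) * T.normTp p f ^ p := by
    intro m
    have h1 : T.Mp p m f ^ p ≤ T.normTp p f ^ p :=
      Real.rpow_le_rpow (Mp_nonneg T m f) (Mp_le_normTp T hf m) (by linarith)
    rw [Mp_pow T hp m f] at h1
    have hc : (0:ℝ) < (treeC q m : ℝ) := by exact_mod_cast treeC_pos hq m
    calc ∑ w ∈ T.levelFinset m, ‖f w‖ ^ p
        = (treeC q m : ℝ) * ((1 / (treeC q m : ℝ)) *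
            ∑ w ∈ T.levelFinset m, ‖f w‖ ^ p) := by
          field_simp
      _ ≤ (treeC q m : ℝ) * T.normTp p f ^ p :=
          mul_le_mul_of_nonneg_left h1 hc.le
  rw [Mp_pow T hp n (f ∘ phi), aSeq, tsum_eq T phi n]
  have hle : ∑ v ∈ T.levelFinset n, ‖f (phi v)‖ ^ p ≤
      (∑ m ∈ suppF T phi n, (T.Nmax phi m n : ℝ) * (treeC q m : ℝ)) * T.normTp p f ^ p := by
    calc ∑ v ∈ T.levelFinset n, ‖f (phi v)‖ ^ p
        ≤ ∑ m ∈ suppF T phi n, (T.Nmax phi m n : ℝ) *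
            ∑ w ∈ T.levelFinset m, ‖f w‖ ^ p :=
          sum_comp_le T phi n _ hg
      _ ≤ ∑ m ∈ suppF T phi n, (T.Nmax phi m n : ℝ) *
            ((treeC q m : ℝ) * T.normTp p f ^ p) := by
          refine Finset.sum_le_sum fun m _ => ?_
          exact mul_le_mul_of_nonneg_left (key m) (Nat.cast_nonneg _)
      _ = _ := by rw [Finset.sum_mul]; exact Finset.sum_congr rfl fun m _ => by ring
  have hcn : (0:ℝ) ≤ 1 / (treeC q n : ℝ) := by positivity
  calc (1 / (treeC q n : ℝ)) * ∑ v ∈ T.levelFinset n, ‖(f ∘ phi) v‖ ^ p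
      ≤ (1 / (treeC q n : ℝ)) *
          ((∑ m ∈ suppF T phi n, (T.Nmax phi m n : ℝ) * (treeC q m : ℝ)) *
            T.normTp p f ^ p) := mul_le_mul_of_nonneg_left hle hcn
    _ = _ := by ring

end TpAux
namespace TpAux
open Finset
variable {q : ℕ} (T : HomTree q) {p : ℝ}

lemma Mp_comp_le (hq : 1 ≤ q) (hp : 1 ≤ p) (phi : T.V → T.V) {f : T.V → ℂ}
    (hf : T.memTp p f) (n : ℕ) :
    T.Mp p n (f ∘ phi) ≤ aSeq T phi n ^ (1 / p) * T.normTp p f := by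
  have h := Mp_comp_pow_le T hq hp phi hf n
  have h2 : (T.Mp p n (f ∘ phi) ^ p) ^ (1 / p) ≤
      (aSeq T phi n * T.normTp p f ^ p) ^ (1 / p) :=
    Real.rpow_le_rpow (Real.rpow_nonneg (Mp_nonneg T n _) p) h (by positivity)
  rwa [rpow_p_invp hp (Mp_nonneg T n _),
    Real.mul_rpow (aSeq_nonneg T phi n) (Real.rpow_nonneg (normTp_nonneg T f) p),
    rpow_p_invp hp (normTp_nonneg T f)] at h2

/-- selector of a maximizing vertex at level `m` for `Nphi · n`. -/
def wsel (hq : 1 ≤ q) (phi : T.V → T.V) (n m : ℕ) : T.V :=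
  ((T.levelFinset m).exists_mem_eq_sup (levelFinset_nonempty T hq m)
    (T.Nphi phi n)).choose

lemma wsel_spec (hq : 1 ≤ q) (phi : T.V → T.V) (n m : ℕ) :
    wsel T hq phi n m ∈ T.levelFinset m ∧
      T.Nmax phi m n = T.Nphi phi n (wsel T hq phi n m) :=
  ((T.levelFinset m).exists_mem_eq_sup (levelFinset_nonempty T hq m)
    (T.Nphi phi n)).choose_spec

lemma wsel_level (hq : 1 ≤ q) (phi : T.V → T.V) (n m : ℕ) :
    T.level (wsel T hq phi n m) = m :=
  (mem_levelFinset T).1 (wsel_spec T hq phi n m).1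

/-- Test function adapted to level `n`. -/
def testf (hq : 1 ≤ q) (p : ℝ) (phi : T.V → T.V) (n : ℕ) : T.V → ℂ := fun w =>
  if w = wsel T hq phi n (T.level w) then
    (((treeC q (T.level w) : ℝ) ^ (1 / p) : ℝ) : ℂ) else 0

lemma testf_abs_pow (hq : 1 ≤ q) (hp : 1 ≤ p) (phi : T.V → T.V) (n : ℕ) (w : T.V) :
    ‖testf T hq p phi n w‖ ^ p =
      if w = wsel T hq phi n (T.level w) then (treeC q (T.level w) : ℝ) else 0 := by
  unfold testf
  split
  · rw [Complex.norm_real, Real.norm_of_nonneg (Real.rpow_nonneg (Nat.cast_nonneg _) _),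
      rpow_invp_p hp (Nat.cast_nonneg _)]
  · rw [norm_zero, Real.zero_rpow (by linarith : p ≠ 0)]

lemma testf_sum (hq : 1 ≤ q) (hp : 1 ≤ p) (phi : T.V → T.V) (n m : ℕ) :
    ∑ w ∈ T.levelFinset m, ‖testf T hq p phi n w‖ ^ p = (treeC q m : ℝ) := by
  have : ∀ w ∈ T.levelFinset m, ‖testf T hq p phi n w‖ ^ p =
      if w = wsel T hq phi n m then (treeC q m : ℝ) else 0 := by
    intro w hw
    rw [testf_abs_pow T hq hp phi n w, (mem_levelFinset T).1 hw]
  rw [Finset.sum_congr rfl this,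
    Finset.sum_ite_eq' (T.levelFinset m) (wsel T hq phi n m) (fun _ => (treeC q m : ℝ)),
    if_pos (wsel_spec T hq phi n m).1]

lemma Mp_testf (hq : 1 ≤ q) (hp : 1 ≤ p) (phi : T.V → T.V) (n m : ℕ) :
    T.Mp p m (testf T hq p phi n) = 1 := by
  have hc : ((treeC q m : ℝ)) ≠ 0 := by
    exact_mod_cast (treeC_pos hq m).ne'
  rw [HomTree.Mp, testf_sum T hq hp phi n m, one_div, inv_mul_cancel₀ hc, Real.one_rpow]

lemma memTp_testf (hq : 1 ≤ q) (hp : 1 ≤ p) (phi : T.V → T.V) (n : ℕ) :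
    T.memTp p (testf T hq p phi n) := by
  refine ⟨1, fun x hx => ?_⟩
  obtain ⟨m, rfl⟩ := hx
  exact le_of_eq (Mp_testf T hq hp phi n m)

lemma normTp_testf (hq : 1 ≤ q) (hp : 1 ≤ p) (phi : T.V → T.V) (n : ℕ) :
    T.normTp p (testf T hq p phi n) = 1 := by
  have : (fun m => T.Mp p m (testf T hq p phi n)) = fun _ => (1:ℝ) :=
    funext (Mp_testf T hq hp phi n)
  rw [HomTree.normTp, this, ciSup_const]

lemma aSeq_le_Mp_testf_pow (hq : 1 ≤ q) (hp : 1 ≤ p) (phi : T.V → T.V) (n : ℕ) :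
    aSeq T phi n ≤ T.Mp p n ((testf T hq p phi n) ∘ phi) ^ p := by
  rw [Mp_pow T hp, aSeq, tsum_eq T phi n]
  refine mul_le_mul_of_nonneg_left ?_ (by positivity)
  have := le_sum_comp T phi n (fun w => ‖testf T hq p phi n w‖ ^ p)
    (fun v => Real.rpow_nonneg (norm_nonneg _) _)
    (wsel T hq phi n) (wsel_level T hq phi n) (fun m => by
      show ‖testf T hq p phi n (wsel T hq phi n m)‖ ^ p = _
      rw [testf_abs_pow T hq hp phi n, wsel_level T hq phi n, if_pos rfl])
  refine le_trans (le_of_eq (Finset.sum_congr rfl fun m _ => ?_)) this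
  rw [(wsel_spec T hq phi n m).2]

end TpAux

/-- `C_φ` is bounded on `T_p` iff `α = sup_n (1/c_n) ∑_m N_{m,n} c_m < ∞`; in that case
`‖C_φ‖^p = α`. -/
theorem bounded_comp_Tp_iff (q : ℕ) (hq : 1 ≤ q) (T : HomTree q) (p : ℝ) (hp : 1 ≤ p)
    (phi : T.V → T.V) :
    (T.BoundedCompTp p phi ↔
      BddAbove (Set.range fun n : ℕ =>
        (1 / (treeC q n : ℝ)) * ∑' m : ℕ, (T.Nmax phi m n : ℝ) * (treeC q m : ℝ))) ∧
    (T.BoundedCompTp p phi →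
      T.opNormTp p phi ^ p =
        ⨆ n : ℕ, (1 / (treeC q n : ℝ)) * ∑' m : ℕ, (T.Nmax phi m n : ℝ) * (treeC q m : ℝ)) := by
  have hp0 : (0:ℝ) < p := by linarith
  have haeq : (fun n : ℕ =>
      (1 / (treeC q n : ℝ)) * ∑' m : ℕ, (T.Nmax phi m n : ℝ) * (treeC q m : ℝ)) =
      fun n => TpAux.aSeq T phi n := rfl
  rw [haeq]
  have iff1 : T.BoundedCompTp p phi ↔ BddAbove (Set.range fun n : ℕ => TpAux.aSeq T phi n) := by
    constructor
    · rintro ⟨h1, C, h2⟩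
      refine ⟨C ^ p, fun x hx => ?_⟩
      obtain ⟨n, rfl⟩ := hx
      set f := TpAux.testf T hq p phi n with hf
      have hmem := TpAux.memTp_testf T hq hp phi n
      have hmemc := h1 f hmem
      have hnc : T.normTp p (f ∘ phi) ≤ C := by
        have h3 := h2 f hmem
        rwa [TpAux.normTp_testf T hq hp phi n, mul_one] at h3
      calc TpAux.aSeq T phi n ≤ T.Mp p n (f ∘ phi) ^ p :=
            TpAux.aSeq_le_Mp_testf_pow T hq hp phi n
        _ ≤ T.normTp p (f ∘ phi) ^ p :=
            Real.rpow_le_rpow (TpAux.Mp_nonneg T n _) (TpAux.Mp_le_normTp T hmemc n) hp0.le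
        _ ≤ C ^ p :=
            Real.rpow_le_rpow (TpAux.normTp_nonneg T _) hnc hp0.le
    · intro hbdd
      set α := ⨆ n : ℕ, TpAux.aSeq T phi n with hαdef
      have hα : ∀ n, TpAux.aSeq T phi n ≤ α := fun n => le_ciSup hbdd n
      have hα0 : 0 ≤ α := le_trans (TpAux.aSeq_nonneg T phi 0) (hα 0)
      have hbound : ∀ f, T.memTp p f → ∀ n,
          T.Mp p n (f ∘ phi) ≤ α ^ (1/p) * T.normTp p f := by
        intro f hf n
        refine (TpAux.Mp_comp_le T hq hp phi hf n).trans ?_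
        exact mul_le_mul_of_nonneg_right
          (Real.rpow_le_rpow (TpAux.aSeq_nonneg T phi n) (hα n) (by positivity))
          (TpAux.normTp_nonneg T f)
      refine ⟨fun f hf => ⟨α ^ (1/p) * T.normTp p f, fun x hx => ?_⟩,
        ⟨α ^ (1/p), fun f hf => ciSup_le (hbound f hf)⟩⟩
      obtain ⟨n, rfl⟩ := hx
      exact hbound f hf n
  refine ⟨iff1, ?_⟩
  intro hB
  have hbdd := iff1.1 hB
  obtain ⟨h1, -⟩ := hB
  set α := ⨆ n : ℕ, TpAux.aSeq T phi n with hαdef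
  have hα : ∀ n, TpAux.aSeq T phi n ≤ α := fun n => le_ciSup hbdd n
  have hα0 : 0 ≤ α := le_trans (TpAux.aSeq_nonneg T phi 0) (hα 0)
  set S := {x : ℝ | ∃ f : T.V → ℂ, T.memTp p f ∧ T.normTp p f = 1 ∧
      x = T.normTp p (f ∘ phi)} with hS
  have hSub : ∀ x ∈ S, x ≤ α ^ (1/p) := by
    rintro x ⟨f, hf, hnf, rfl⟩
    refine ciSup_le fun n => ?_
    have h2 := TpAux.Mp_comp_le T hq hp phi hf n
    rw [hnf, mul_one] at h2
    exact h2.trans (Real.rpow_le_rpow (TpAux.aSeq_nonneg T phi n) (hα n) (by positivity))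
  have hxn : ∀ n : ℕ, T.normTp p ((TpAux.testf T hq p phi n) ∘ phi) ∈ S := fun n =>
    ⟨TpAux.testf T hq p phi n, TpAux.memTp_testf T hq hp phi n,
      TpAux.normTp_testf T hq hp phi n, rfl⟩
  have hne : S.Nonempty := ⟨_, hxn 0⟩
  have hbddS : BddAbove S := ⟨α ^ (1/p), hSub⟩
  have hsle : sSup S ≤ α ^ (1/p) := csSup_le hne hSub
  have hlow : ∀ n : ℕ, TpAux.aSeq T phi n ^ (1/p) ≤ sSup S := by
    intro n
    have h1' : TpAux.aSeq T phi n ^ (1/p) ≤ T.Mp p n ((TpAux.testf T hq p phi n) ∘ phi) := by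
      have h2 := Real.rpow_le_rpow (TpAux.aSeq_nonneg T phi n)
        (TpAux.aSeq_le_Mp_testf_pow T hq hp phi n) (by positivity : (0:ℝ) ≤ 1/p)
      rwa [TpAux.rpow_p_invp hp (TpAux.Mp_nonneg T n _)] at h2
    have hmemc := h1 _ (TpAux.memTp_testf T hq hp phi n)
    exact le_trans (h1'.trans (TpAux.Mp_le_normTp T hmemc n)) (le_csSup hbddS (hxn n))
  have hs0 : 0 ≤ sSup S :=
    le_trans (Real.rpow_nonneg (TpAux.aSeq_nonneg T phi 0) _) (hlow 0)
  have hop : T.opNormTp p phi = sSup S := rfl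
  rw [hop]
  have upper : sSup S ^ p ≤ α := by
    have h2 := Real.rpow_le_rpow hs0 hsle hp0.le
    rwa [TpAux.rpow_invp_p hp hα0] at h2
  have lower : α ≤ sSup S ^ p := by
    refine ciSup_le fun n => ?_
    have h2 := Real.rpow_le_rpow (Real.rpow_nonneg (TpAux.aSeq_nonneg T phi n) _)
      (hlow n) hp0.le
    rwa [TpAux.rpow_invp_p hp (TpAux.aSeq_nonneg T phi n)] at h2
  exact le_antisymm upper lower
end
end

section
/- Let T be the 2-homogeneous rooted tree (q = 1), let φ be a self-map of T and let 1 ≤ p < ∞. Then C_φ is a bounded operator on T_{p,0} (equivalently, C_φ maps T_{p,0} into T_{p,0}) if and only if |φ(v)| → ∞ as |v| → ∞. -/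
open scoped BigOperators Classical

noncomputable section

namespace TwoHomAux

variable (T : HomTree 1) {p : ℝ}

lemma c_one_le (n : ℕ) : (1:ℝ) ≤ (treeC 1 n : ℝ) := by
  unfold treeC; split <;> norm_num

lemma c_le_two (n : ℕ) : (treeC 1 n : ℝ) ≤ 2 := by
  unfold treeC; split <;> simp

lemma c_pos (n : ℕ) : (0:ℝ) < (treeC 1 n : ℝ) :=
  lt_of_lt_of_le zero_lt_one (c_one_le n)

lemma mem_levelFinset {v : T.V} {n : ℕ} : v ∈ T.levelFinset n ↔ T.level v = n := by
  simp [HomTree.levelFinset, Set.Finite.mem_toFinset]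

lemma rpow_p_inv (hp : 1 ≤ p) {x : ℝ} (hx : 0 ≤ x) : (x ^ p) ^ (1/p) = x := by
  have hpne : p ≠ 0 := by linarith
  rw [← Real.rpow_mul hx, mul_one_div_cancel hpne, Real.rpow_one]

lemma base_nonneg (hp : 1 ≤ p) (n : ℕ) (f : T.V → ℂ) :
    0 ≤ (1 / (treeC 1 n : ℝ)) * ∑ v ∈ T.levelFinset n, ‖f v‖ ^ p :=
  mul_nonneg (by positivity) (Finset.sum_nonneg fun v _ =>
    Real.rpow_nonneg (norm_nonneg _) _)

lemma Mp_nonneg (hp : 1 ≤ p) (n : ℕ) (f : T.V → ℂ) : 0 ≤ T.Mp p n f :=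
  Real.rpow_nonneg (base_nonneg T hp n f) _

lemma Mp_le_of_forall_le (hp : 1 ≤ p) {n : ℕ} {f : T.V → ℂ} {B : ℝ} (hB : 0 ≤ B)
    (h : ∀ v ∈ T.levelFinset n, ‖f v‖ ≤ B) : T.Mp p n f ≤ B := by
  have hip : (0:ℝ) ≤ 1/p := by positivity
  have hp0 : (0:ℝ) ≤ p := by linarith
  have hS : ∑ v ∈ T.levelFinset n, ‖f v‖ ^ p ≤ (treeC 1 n : ℝ) * B ^ p := by
    calc ∑ v ∈ T.levelFinset n, ‖f v‖ ^ p
        ≤ ∑ _v ∈ T.levelFinset n, B ^ p :=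
          Finset.sum_le_sum fun v hv =>
            Real.rpow_le_rpow (norm_nonneg _) (h v hv) hp0
      _ = ((T.levelFinset n).card : ℝ) * B ^ p := by rw [Finset.sum_const, nsmul_eq_mul]
      _ = (treeC 1 n : ℝ) * B ^ p := by rw [HomTree.levelFinset, T.card_level n]
  have hbase : (1 / (treeC 1 n : ℝ)) * ∑ v ∈ T.levelFinset n, ‖f v‖ ^ p
      ≤ B ^ p := by
    have hc := c_pos n
    rw [one_div, inv_mul_le_iff₀ hc]
    calc ∑ v ∈ T.levelFinset n, ‖f v‖ ^ p ≤ (treeC 1 n : ℝ) * B ^ p := hS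
      _ = (treeC 1 n : ℝ) * B ^ p := rfl
  calc T.Mp p n f ≤ (B ^ p) ^ (1/p) :=
        Real.rpow_le_rpow (base_nonneg T hp n f) hbase hip
    _ = B := rpow_p_inv hp hB

lemma abs_le_Mp (hp : 1 ≤ p) {n : ℕ} {f : T.V → ℂ} {v : T.V} (hv : v ∈ T.levelFinset n) :
    ‖f v‖ ≤ (2:ℝ) ^ (1/p) * T.Mp p n f := by
  have hip : (0:ℝ) ≤ 1/p := by positivity
  set S := ∑ w ∈ T.levelFinset n, ‖f w‖ ^ p with hSdef
  have hS0 : 0 ≤ S := Finset.sum_nonneg fun w _ =>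
    Real.rpow_nonneg (norm_nonneg _) _
  have h1 : ‖f v‖ ^ p ≤ S :=
    Finset.single_le_sum (fun w _ => Real.rpow_nonneg (norm_nonneg _) _) hv
  have h2 : S ≤ 2 * ((1 / (treeC 1 n : ℝ)) * S) := by
    have h2c : (1:ℝ) ≤ 2 / (treeC 1 n : ℝ) := (one_le_div (c_pos n)).2 (c_le_two n)
    calc S = 1 * S := (one_mul S).symm
      _ ≤ (2 / (treeC 1 n : ℝ)) * S := mul_le_mul_of_nonneg_right h2c hS0
      _ = 2 * ((1 / (treeC 1 n : ℝ)) * S) := by ring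
  calc ‖f v‖ = (‖f v‖ ^ p) ^ (1/p) :=
        (rpow_p_inv hp (norm_nonneg _)).symm
    _ ≤ (2 * ((1 / (treeC 1 n : ℝ)) * S)) ^ (1/p) :=
        Real.rpow_le_rpow (Real.rpow_nonneg (norm_nonneg _) _)
          (h1.trans h2) hip
    _ = (2:ℝ) ^ (1/p) * T.Mp p n f := by
        rw [Real.mul_rpow (by norm_num) (base_nonneg T hp n f)]; rfl

lemma Mp_eq_zero (hp : 1 ≤ p) {n : ℕ} {f : T.V → ℂ}
    (h : ∀ v ∈ T.levelFinset n, f v = 0) : T.Mp p n f = 0 := by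
  have hpne : p ≠ 0 := by linarith
  have : ∑ v ∈ T.levelFinset n, ‖f v‖ ^ p = 0 :=
    Finset.sum_eq_zero fun v hv => by rw [h v hv, norm_zero, Real.zero_rpow hpne]
  unfold HomTree.Mp
  rw [this, mul_zero, Real.zero_rpow (one_div_ne_zero hpne)]

lemma half_le_Mp (hp : 1 ≤ p) {n : ℕ} {f : T.V → ℂ} {v : T.V}
    (hv : v ∈ T.levelFinset n) (hfv : ‖f v‖ = 1) :
    ((1:ℝ)/2) ^ (1/p) ≤ T.Mp p n f := by
  have hip : (0:ℝ) ≤ 1/p := by positivity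
  have h1 : (1:ℝ) ≤ ∑ w ∈ T.levelFinset n, ‖f w‖ ^ p := by
    have h0 := Finset.single_le_sum
      (f := fun w => ‖f w‖ ^ p)
      (fun w _ => Real.rpow_nonneg (norm_nonneg _) _) hv
    have h1' : ‖f v‖ ^ p ≤ ∑ w ∈ T.levelFinset n, ‖f w‖ ^ p := h0
    rwa [hfv, Real.one_rpow] at h1'
  have h2 : (1:ℝ)/2 ≤ (1 / (treeC 1 n : ℝ)) * ∑ w ∈ T.levelFinset n, ‖f w‖ ^ p := by
    have hc2 : (1:ℝ)/2 ≤ 1 / (treeC 1 n : ℝ) :=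
      one_div_le_one_div_of_le (c_pos n) (c_le_two n)
    calc (1:ℝ)/2 ≤ 1 / (treeC 1 n : ℝ) := hc2
      _ = (1 / (treeC 1 n : ℝ)) * 1 := (mul_one _).symm
      _ ≤ _ := mul_le_mul_of_nonneg_left h1 (by positivity)
  exact Real.rpow_le_rpow (by norm_num) h2 hip

end TwoHomAux

open TwoHomAux

/-- On the 2-homogeneous tree, for `1 ≤ p < ∞`, `C_φ` is bounded on `T_{p,0}` iff
`|φ v| → ∞` as `|v| → ∞`. -/
theorem bounded_comp_Tp0_iff_two_homogeneous (T : HomTree 1) (p : ℝ) (hp : 1 ≤ p)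
    (phi : T.V → T.V) :
    T.BoundedCompTp0 p phi ↔
      (∀ A : ℕ, ∃ N : ℕ, ∀ v : T.V, N ≤ T.level v → A ≤ T.level (phi v)) := by
  have h2p : (0:ℝ) < (2:ℝ) ^ (1/p) := Real.rpow_pos_of_pos (by norm_num) _
  constructor
  · intro hB
    by_contra hcon
    push_neg at hcon
    obtain ⟨A, hA⟩ := hcon
    set f : T.V → ℂ := fun w => if T.level w < A then 1 else 0 with hf
    have habs : ∀ w, ‖f w‖ ≤ 1 := by
      intro w; simp only [hf]; split <;> simp
    have hmem : T.memTp0 p f := by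
      constructor
      · refine ⟨1, ?_⟩
        rintro x ⟨n, rfl⟩
        exact Mp_le_of_forall_le T hp zero_le_one (fun v _ => habs v)
      · apply Filter.Tendsto.congr' _ (tendsto_const_nhds (x := (0:ℝ)))
        filter_upwards [Filter.eventually_ge_atTop A] with n hn
        refine (Mp_eq_zero T hp fun v hv => ?_).symm
        have hlv : T.level v = n := (mem_levelFinset T).1 hv
        simp only [hf]
        rw [if_neg (by omega)]
    have hcomp := (hB.1 f hmem).2
    have hpos : (0:ℝ) < ((1:ℝ)/2) ^ (1/p) := Real.rpow_pos_of_pos (by norm_num) _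
    rw [Metric.tendsto_atTop] at hcomp
    obtain ⟨N, hN⟩ := hcomp _ hpos
    obtain ⟨v, hvN, hvA⟩ := hA N
    have hvmem : v ∈ T.levelFinset (T.level v) := (mem_levelFinset T).2 rfl
    have hlow : ((1:ℝ)/2) ^ (1/p) ≤ T.Mp p (T.level v) (f ∘ phi) := by
      refine half_le_Mp T hp hvmem ?_
      simp only [Function.comp_apply, hf]
      rw [if_pos hvA]; simp
    have hup := hN (T.level v) hvN
    rw [Real.dist_eq, sub_zero, abs_of_nonneg (Mp_nonneg T hp _ _)] at hup
    linarith
  · intro hphi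
    have key : ∀ (f : T.V → ℂ) (n : ℕ) (B : ℝ), 0 ≤ B →
        (∀ v ∈ T.levelFinset n, T.Mp p (T.level (phi v)) f ≤ B) →
        T.Mp p n (f ∘ phi) ≤ (2:ℝ) ^ (1/p) * B := by
      intro f n B hB h
      refine Mp_le_of_forall_le T hp (mul_nonneg h2p.le hB) fun v hv => ?_
      have h1 : ‖f (phi v)‖ ≤ (2:ℝ) ^ (1/p) * T.Mp p (T.level (phi v)) f :=
        abs_le_Mp T hp ((mem_levelFinset T).2 rfl)
      calc ‖(f ∘ phi) v‖ = ‖f (phi v)‖ := rfl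
        _ ≤ (2:ℝ) ^ (1/p) * T.Mp p (T.level (phi v)) f := h1
        _ ≤ (2:ℝ) ^ (1/p) * B := mul_le_mul_of_nonneg_left (h v hv) h2p.le
    constructor
    · rintro f ⟨hfb, hf0⟩
      have hMle : ∀ m, T.Mp p m f ≤ T.normTp p f := fun m => le_ciSup hfb m
      have hnn : 0 ≤ T.normTp p f := le_trans (Mp_nonneg T hp 0 f) (hMle 0)
      constructor
      · refine ⟨(2:ℝ) ^ (1/p) * T.normTp p f, ?_⟩
        rintro x ⟨n, rfl⟩
        exact key f n _ hnn (fun v _ => hMle _)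
      · rw [Metric.tendsto_atTop]
        intro ε hε
        set δ := ε / (2 * (2:ℝ) ^ (1/p)) with hδ
        have hδpos : 0 < δ := by positivity
        rw [Metric.tendsto_atTop] at hf0
        obtain ⟨M, hM⟩ := hf0 δ hδpos
        obtain ⟨N, hN⟩ := hphi M
        refine ⟨N, fun n hn => ?_⟩
        rw [Real.dist_eq, sub_zero, abs_of_nonneg (Mp_nonneg T hp _ _)]
        have hkey : T.Mp p n (f ∘ phi) ≤ (2:ℝ) ^ (1/p) * δ := by
          refine key f n δ hδpos.le fun v hv => ?_
          have hlv : T.level v = n := (mem_levelFinset T).1 hv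
          have hlev : M ≤ T.level (phi v) := hN v (by omega)
          have := hM _ hlev
          rw [Real.dist_eq, sub_zero, abs_of_nonneg (Mp_nonneg T hp _ _)] at this
          exact this.le
        have hfin : (2:ℝ) ^ (1/p) * δ < ε := by
          rw [hδ]
          rw [show (2:ℝ) ^ (1/p) * (ε / (2 * (2:ℝ) ^ (1/p))) = ε / 2 by
            field_simp]
          linarith
        linarith
    · refine ⟨(2:ℝ) ^ (1/p), fun f hf => ?_⟩
      obtain ⟨hfb, _⟩ := hf
      have hMle : ∀ m, T.Mp p m f ≤ T.normTp p f := fun m => le_ciSup hfb m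
      have hnn : 0 ≤ T.normTp p f := le_trans (Mp_nonneg T hp 0 f) (hMle 0)
      exact ciSup_le fun n => key f n _ hnn (fun v _ => hMle _)
end
end

section
/- Let T be the (q+1)-homogeneous rooted tree, q ≥ 1, let φ be a self-map of T and let 1 ≤ p < ∞. If C_φ is a bounded operator on T_{p,0} (in particular C_φ maps T_{p,0} into T_{p,0}), then for every vertex v ∈ T one has (c_{|v|}/c_n) · N_φ(n,v) → 0 as n → ∞. -/
open scoped BigOperators Classical

noncomputable section

/-- If `C_φ` is bounded on `T_{p,0}` (`1 ≤ p < ∞`), then for every vertex `v`,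
`(c_{|v|}/c_n) · N_φ(n, v) → 0` as `n → ∞`. -/
theorem preimage_count_tendsto_zero (q : ℕ) (hq : 1 ≤ q) (T : HomTree q)
    (p : ℝ) (hp : 1 ≤ p) (phi : T.V → T.V) (hb : T.BoundedCompTp0 p phi) :
    ∀ v : T.V, Filter.Tendsto
      (fun n : ℕ => ((treeC q (T.level v) : ℝ) / (treeC q n : ℝ)) * (T.Nphi phi n v : ℝ))
      Filter.atTop (nhds 0) := by
  intro v
  have hp0 : (0:ℝ) < p := lt_of_lt_of_le one_pos hp
  have hpne : p ≠ 0 := ne_of_gt hp0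
  set f : T.V → ℂ := fun w => if w = v then 1 else 0 with hf
  have habs : ∀ w, ‖f w‖ ^ p = if w = v then (1:ℝ) else 0 := by
    intro w
    by_cases h : w = v <;> simp [hf, h, Real.zero_rpow hpne]
  have hmem : ∀ n w, w ∈ T.levelFinset n ↔ T.level w = n := by
    intro n w
    simp [HomTree.levelFinset, Set.Finite.mem_toFinset]
  have hsum : ∀ n, ∑ w ∈ T.levelFinset n, ‖f w‖ ^ p
      = if T.level v = n then (1:ℝ) else 0 := by
    intro n
    simp only [habs]
    rw [Finset.sum_ite_eq' (T.levelFinset n) v (fun _ => (1:ℝ))]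
    simp [hmem n v]
  have hsumphi : ∀ n, ∑ w ∈ T.levelFinset n, ‖(f ∘ phi) w‖ ^ p
      = (T.Nphi phi n v : ℝ) := by
    intro n
    simp only [Function.comp, habs]
    rw [Finset.sum_boole]
    rfl
  have hc : ∀ n, 1 ≤ treeC q n := by
    intro n
    unfold treeC
    split
    · exact le_refl 1
    · simpa using Nat.mul_le_mul (by omega : 1 ≤ q + 1)
        (Nat.one_le_pow _ _ (by omega))
  have hcR : ∀ n, (1:ℝ) ≤ (treeC q n : ℝ) := fun n => by exact_mod_cast hc n
  have hcpos : ∀ n, (0:ℝ) < (treeC q n : ℝ) := fun n => lt_of_lt_of_le one_pos (hcR n)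
  have hf0 : T.memTp0 p f := by
    constructor
    · refine ⟨1, ?_⟩
      rintro x ⟨n, rfl⟩
      show T.Mp p n f ≤ 1
      unfold HomTree.Mp
      rw [hsum n]
      have h1 : (0:ℝ) ≤ (1 / (treeC q n : ℝ)) * (if T.level v = n then (1:ℝ) else 0) := by
        have : (0:ℝ) ≤ (if T.level v = n then (1:ℝ) else 0) := by positivity
        positivity
      have h2 : (1 / (treeC q n : ℝ)) * (if T.level v = n then (1:ℝ) else 0) ≤ 1 := by
        have ha : (1 / (treeC q n : ℝ)) ≤ 1 := by
          rw [div_le_one (hcpos n)]; exact hcR n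
        have hb' : (if T.level v = n then (1:ℝ) else 0) ≤ 1 := by split_ifs <;> norm_num
        calc (1 / (treeC q n : ℝ)) * (if T.level v = n then (1:ℝ) else 0)
            ≤ 1 * 1 := mul_le_mul ha hb' (by positivity) (by norm_num)
          _ = 1 := by norm_num
      exact Real.rpow_le_one h1 h2 (by positivity)
    · have : (fun n => T.Mp p n f) =ᶠ[Filter.atTop] fun _ => (0:ℝ) := by
        filter_upwards [Filter.eventually_gt_atTop (T.level v)] with n hn
        unfold HomTree.Mp
        rw [hsum n, if_neg (by omega), mul_zero, Real.zero_rpow (by positivity)]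
      exact Filter.Tendsto.congr' this.symm tendsto_const_nhds
  have h2 : Filter.Tendsto (fun n => T.Mp p n (f ∘ phi)) Filter.atTop (nhds 0) :=
    (hb.1 f hf0).2
  have h3 : Filter.Tendsto (fun n => (T.Mp p n (f ∘ phi)) ^ p) Filter.atTop (nhds 0) := by
    have := (Real.continuousAt_rpow_const 0 p (Or.inr hp0.le)).tendsto.comp h2
    simpa [Function.comp_def, Real.zero_rpow hpne] using this
  have h4 := h3.const_mul (treeC q (T.level v) : ℝ)
  rw [mul_zero] at h4
  refine Filter.Tendsto.congr ?_ h4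
  intro n
  unfold HomTree.Mp
  rw [hsumphi n]
  have hnn : (0:ℝ) ≤ (1 / (treeC q n : ℝ)) * (T.Nphi phi n v : ℝ) := by positivity
  rw [← Real.rpow_mul hnn, one_div_mul_cancel hpne, Real.rpow_one]
  field_simp
end
end

section
/- Let T be the (q+1)-homogeneous rooted tree, q ≥ 1, let 1 ≤ p ≤ ∞ and let φ be a self-map of T such that C_φ is a bounded operator on T_p. Then C_φ is invertible on T_p if and only if φ is a bijection of T and C_{φ⁻¹} is a bounded operator on T_p; moreover, in that case the inverse operator is C_φ⁻¹ = C_{φ⁻¹}. -/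
open scoped BigOperators Classical

noncomputable section

open scoped ENNReal

namespace HomTree

variable {q : ℕ} (T : HomTree q)

/-- `f ∈ T_p` for an extended exponent `1 ≤ p ≤ ∞`. -/
def memTpE (p : ℝ≥0∞) (f : T.V → ℂ) : Prop :=
  if p = ⊤ then T.memTinf f else T.memTp p.toReal f

/-- `‖f‖_p` for an extended exponent `1 ≤ p ≤ ∞`. -/
def normTpE (p : ℝ≥0∞) (f : T.V → ℂ) : ℝ :=
  if p = ⊤ then T.normTinf f else T.normTp p.toReal f

/-- `C_φ` is a bounded operator on `T_p`, `1 ≤ p ≤ ∞`. -/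
def BoundedCompTpE (p : ℝ≥0∞) (phi : T.V → T.V) : Prop :=
  (∀ f : T.V → ℂ, T.memTpE p f → T.memTpE p (f ∘ phi)) ∧
  ∃ C : ℝ, ∀ f : T.V → ℂ, T.memTpE p f → T.normTpE p (f ∘ phi) ≤ C * T.normTpE p f

/-- `C_φ` is an invertible bounded operator on `T_p`: there is a bounded linear
operator `B` on `T_p` with `B ∘ C_φ = C_φ ∘ B = id` on `T_p`. -/
def InvertibleCompTpE (p : ℝ≥0∞) (phi : T.V → T.V) : Prop :=
  T.BoundedCompTpE p phi ∧
  ∃ B : (T.V → ℂ) → (T.V → ℂ),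
    (∀ f g : T.V → ℂ, T.memTpE p f → T.memTpE p g → B (f + g) = B f + B g) ∧
    (∀ (c : ℂ) (f : T.V → ℂ), T.memTpE p f → B (c • f) = c • B f) ∧
    (∀ f : T.V → ℂ, T.memTpE p f → T.memTpE p (B f)) ∧
    (∃ C : ℝ, ∀ f : T.V → ℂ, T.memTpE p f → T.normTpE p (B f) ≤ C * T.normTpE p f) ∧
    (∀ f : T.V → ℂ, T.memTpE p f → B (f ∘ phi) = f) ∧
    (∀ f : T.V → ℂ, T.memTpE p f → (B f) ∘ phi = f)

end HomTree


namespace HomTree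

lemma mem_of_bdd {q : ℕ} (T : HomTree q) (p : ℝ≥0∞) (f : T.V → ℂ)
    (hf : ∀ v, ‖f v‖ ≤ 1) : T.memTpE p f := by
  unfold memTpE
  split
  · refine ⟨1, ?_⟩
    rintro x ⟨n, rfl⟩
    unfold Minf
    apply Real.sSup_le _ zero_le_one
    rintro x ⟨v, _, rfl⟩
    exact hf v
  · refine ⟨1, ?_⟩
    rintro x ⟨n, rfl⟩
    unfold Mp
    apply Real.rpow_le_one ?_ ?_ (by positivity)
    · positivity
    · rcases Nat.eq_zero_or_pos (treeC q n) with h | h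
      · simp [h]
      · have hc : (0 : ℝ) < (treeC q n : ℝ) := by exact_mod_cast h
        rw [one_div, inv_mul_le_iff₀ hc, mul_one]
        calc ∑ v ∈ T.levelFinset n, ‖f v‖ ^ p.toReal
            ≤ ∑ _v ∈ T.levelFinset n, (1 : ℝ) := by
              apply Finset.sum_le_sum
              intro v _
              exact Real.rpow_le_one (by positivity) (hf v) ENNReal.toReal_nonneg
          _ = (treeC q n : ℝ) := by
              rw [Finset.sum_const, nsmul_eq_mul, mul_one]
              norm_cast
              exact T.card_level n

/-- The delta function at a vertex. -/
def delta {q : ℕ} (T : HomTree q) (w : T.V) : T.V → ℂ := fun v => if v = w then 1 else 0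

lemma delta_mem {q : ℕ} (T : HomTree q) (p : ℝ≥0∞) (w : T.V) : T.memTpE p (T.delta w) := by
  apply mem_of_bdd
  intro v
  unfold delta
  split <;> simp

end HomTree

/-- For `1 ≤ p ≤ ∞` and `C_φ` bounded on `T_p`: `C_φ` is invertible iff `φ` is a
bijection whose inverse `ψ` induces a bounded `C_ψ`; moreover the inverse operator is
then `C_ψ = C_{φ⁻¹}`. -/
theorem invertible_comp_iff (q : ℕ) (hq : 1 ≤ q) (T : HomTree q)
    (p : ℝ≥0∞) (hp : 1 ≤ p) (phi : T.V → T.V) (hb : T.BoundedCompTpE p phi) :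
    (T.InvertibleCompTpE p phi ↔
      (Function.Bijective phi ∧
        ∃ psi : T.V → T.V, Function.LeftInverse psi phi ∧ Function.RightInverse psi phi ∧
          T.BoundedCompTpE p psi)) ∧
    (T.InvertibleCompTpE p phi →
      ∀ psi : T.V → T.V, Function.LeftInverse psi phi → Function.RightInverse psi phi →
        T.BoundedCompTpE p psi ∧
        (∀ f : T.V → ℂ, T.memTpE p f → (f ∘ phi) ∘ psi = f ∧ (f ∘ psi) ∘ phi = f)) := by
  obtain ⟨hbphi, hbC⟩ := hb
  have h0mem : T.memTpE p (0 : T.V → ℂ) := T.mem_of_bdd p 0 (by simp)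
  -- key lemma: from invertibility, extract structure
  have main : T.InvertibleCompTpE p phi →
      ∀ psi : T.V → T.V, Function.LeftInverse psi phi → Function.RightInverse psi phi →
        T.BoundedCompTpE p psi ∧
        (∀ f : T.V → ℂ, T.memTpE p f → (f ∘ phi) ∘ psi = f ∧ (f ∘ psi) ∘ phi = f) := by
    rintro ⟨-, B, hadd, hsmul, hmem, ⟨C, hC⟩, hBC, hCB⟩ psi hl hr
    have key : ∀ f, T.memTpE p f → f ∘ psi = B f := by
      intro f hf
      funext v
      have h := congrFun (hCB f hf) (psi v)
      simp only [Function.comp_apply, hr v] at h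
      simpa [Function.comp] using h.symm
    refine ⟨⟨fun f hf => by rw [key f hf]; exact hmem f hf,
      ⟨C, fun f hf => by rw [key f hf]; exact hC f hf⟩⟩, ?_⟩
    intro f hf
    constructor
    · funext v; simp [Function.comp, hr v]
    · funext v; simp [Function.comp, hl v]
  have bij : T.InvertibleCompTpE p phi → Function.Bijective phi := by
    rintro ⟨-, B, hadd, hsmul, hmem, hbnd, hBC, hCB⟩
    have hB0 : B 0 = 0 := by
      have h := hadd 0 0 h0mem h0mem
      rw [add_zero] at h
      exact (add_eq_left.mp h.symm)
    constructor
    · intro a b hab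
      by_contra hne
      have hf := hCB (T.delta a) (T.delta_mem p a)
      have h1 : B (T.delta a) (phi a) = 1 := by
        have := congrFun hf a
        simpa [HomTree.delta] using this
      have h2 : B (T.delta a) (phi b) = 0 := by
        have := congrFun hf b
        simpa [HomTree.delta, Ne.symm hne] using this
      rw [hab] at h1
      exact one_ne_zero (h1.symm.trans h2)
    · intro w
      by_contra hw
      push_neg at hw
      have hcomp : (T.delta w) ∘ phi = 0 := by
        funext v
        simp [HomTree.delta, hw v]
      have h := hBC (T.delta w) (T.delta_mem p w)
      rw [hcomp, hB0] at h
      have := congrFun h w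
      simp [HomTree.delta] at this
  constructor
  · constructor
    · intro hinv
      have hbij := bij hinv
      obtain ⟨psi, hl, hr⟩ := Function.bijective_iff_has_inverse.mp hbij
      exact ⟨hbij, psi, hl, hr, (main hinv psi hl hr).1⟩
    · rintro ⟨hbij, psi, hl, hr, hpsimem, Cpsi, hCpsi⟩
      refine ⟨⟨hbphi, hbC⟩, fun f => f ∘ psi, ?_, ?_, ?_, ?_, ?_, ?_⟩
      · intro f g _ _; rfl
      · intro c f _; rfl
      · intro f hf; exact hpsimem f hf
      · exact ⟨Cpsi, fun f hf => hCpsi f hf⟩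
      · intro f _; funext v; simp [Function.comp, hr v]
      · intro f _; funext v; simp [Function.comp, hl v]
  · exact main
end
end
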